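/- arXiv:1307.5230 — 8 statements merged into one kernel-verified Lean document; each statement's English description precedes it below -/
import Mathlib

section
/- If every target is covered by exactly two sensors (F_i = 2 for all i), then there exist two disjoint set covers of the universe if and only if the intersection graph R (whose vertices are the sensors, with an edge between two sensors iff they share a target) is properly 2-colorable; moreover, in a proper 2-coloring, each color class is a set cover. -/
/-- The intersection graph of an indexed family of sensors: vertices are sensors,
with an edge between two distinct sensors iff they share a target. -/
def interGraph {ι α : Type*} [DecidableEq α] (S : ι → Finset α) : SimpleGraph ι where
  Adj i j := i ≠ j ∧ ((S i) ∩ (S j)).Nonempty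
  symm := by
    constructor
    intro i j h
    exact ⟨h.1.symm, by rw [Finset.inter_comm]; exact h.2⟩
  loopless := by constructor; intro i h; exact h.1 rfl

/-- If every target is covered by exactly two sensors, then two disjoint set covers
exist iff the intersection graph `R` is properly 2-colorable; moreover in any proper
2-coloring each color class is a set cover. -/
theorem stmt0 {ι α : Type*} [Fintype ι] [DecidableEq ι] [DecidableEq α]
    (U : Finset α) (hU : U.Nonempty) (S : ι → Finset α)
    (hsub : ∀ i, S i ⊆ U)
    (hfreq : ∀ x ∈ U, (Finset.univ.filter (fun i => x ∈ S i)).card = 2) :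
    ((∃ C₁ C₂ : Finset ι, Disjoint C₁ C₂ ∧
        (∀ x ∈ U, ∃ i ∈ C₁, x ∈ S i) ∧ (∀ x ∈ U, ∃ i ∈ C₂, x ∈ S i)) ↔
      ∃ f : ι → Fin 2, ∀ i j, (interGraph S).Adj i j → f i ≠ f j) ∧
    (∀ f : ι → Fin 2, (∀ i j, (interGraph S).Adj i j → f i ≠ f j) →
      ∀ c : Fin 2, ∀ x ∈ U, ∃ i, f i = c ∧ x ∈ S i) := by
  have key : ∀ x ∈ U, ∃ a b : ι, a ≠ b ∧
      (Finset.univ.filter (fun i => x ∈ S i)) = {a, b} := by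
    intro x hx
    obtain ⟨a, b, hab, h⟩ := Finset.card_eq_two.mp (hfreq x hx)
    exact ⟨a, b, hab, h⟩
  have cover : ∀ f : ι → Fin 2, (∀ i j, (interGraph S).Adj i j → f i ≠ f j) →
      ∀ c : Fin 2, ∀ x ∈ U, ∃ i, f i = c ∧ x ∈ S i := by
    intro f hf c x hx
    obtain ⟨a, b, hab, h⟩ := key x hx
    have ha : x ∈ S a := by
      have : a ∈ Finset.univ.filter (fun i => x ∈ S i) := by
        rw [h]; simp
      simpa using this
    have hb : x ∈ S b := by
      have : b ∈ Finset.univ.filter (fun i => x ∈ S i) := by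
        rw [h]; simp
      simpa using this
    have hadj : (interGraph S).Adj a b :=
      ⟨hab, ⟨x, Finset.mem_inter.mpr ⟨ha, hb⟩⟩⟩
    have hne := hf a b hadj
    have : c = f a ∨ c = f b := by
      have h1 := c.isLt
      have h2 := (f a).isLt
      have h3 := (f b).isLt
      simp only [Fin.ext_iff] at hne ⊢
      omega
    rcases this with h | h
    · exact ⟨a, h.symm, ha⟩
    · exact ⟨b, h.symm, hb⟩
  refine ⟨⟨?_, ?_⟩, cover⟩
  · rintro ⟨C₁, C₂, hdisj, h₁, h₂⟩
    refine ⟨fun i => if i ∈ C₁ then 0 else 1, ?_⟩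
    intro i j hadj hfij
    obtain ⟨hij, x, hx⟩ := hadj
    obtain ⟨hxi, hxj⟩ := Finset.mem_inter.mp hx
    have hxU : x ∈ U := hsub i hxi
    obtain ⟨a, b, hab, h⟩ := key x hxU
    have hi : i ∈ ({a, b} : Finset ι) := by
      rw [← h]; simp [hxi]
    have hj : j ∈ ({a, b} : Finset ι) := by
      rw [← h]; simp [hxj]
    obtain ⟨k, hk₁, hxk⟩ := h₁ x hxU
    obtain ⟨l, hl₂, hxl⟩ := h₂ x hxU
    have hk : k ∈ ({a, b} : Finset ι) := by
      rw [← h]; simp [hxk]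
    have hl : l ∈ ({a, b} : Finset ι) := by
      rw [← h]; simp [hxl]
    have hkl : k ≠ l := fun e => (Finset.disjoint_left.mp hdisj hk₁) (e ▸ hl₂)
    have hl₁ : l ∉ C₁ := Finset.disjoint_left.mp hdisj.symm hl₂
    simp only [Finset.mem_insert, Finset.mem_singleton] at hi hj hk hl
    -- k and l are the two distinct elements, as are i and j
    have hki : k = i ∨ k = j := by rcases hi with rfl | rfl <;> rcases hj with rfl | rfl <;>
      rcases hk with rfl | rfl <;> tauto
    have hli : l = i ∨ l = j := by rcases hi with rfl | rfl <;> rcases hj with rfl | rfl <;>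
      rcases hl with rfl | rfl <;> tauto
    rcases hki with rfl | rfl
    · have : l = j := by tauto
      subst this
      simp [hk₁, hl₁] at hfij
    · have : l = i := by tauto
      subst this
      simp [hk₁, hl₁] at hfij
  · rintro ⟨f, hf⟩
    refine ⟨Finset.univ.filter (fun i => f i = 0), Finset.univ.filter (fun i => f i = 1), ?_, ?_, ?_⟩
    · rw [Finset.disjoint_left]
      intro i h0 h1
      simp at h0 h1
      rw [h0] at h1
      exact absurd h1 (by decide)
    · intro x hx
      obtain ⟨i, hfi, hxi⟩ := cover f hf 0 x hx
      exact ⟨i, by simp [hfi], hxi⟩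
    · intro x hx
      obtain ⟨i, hfi, hxi⟩ := cover f hf 1 x hx
      exact ⟨i, by simp [hfi], hxi⟩
end

section
/- If each of C_p and C_q is a set cover of the universe U using subsets from S ∪ T, where T is the collection of all singletons of U, and C_p, C_q are disjoint, then (C_p ∪ C_q) \ T is a set cover of U using only subsets from S. -/
/-- If `C_p` and `C_q` are disjoint set covers of `U` from `S ∪ T`, where `T` is the
family of singletons of `U`, then `(C_p ∪ C_q) \ T` is a set cover of `U` using only
subsets from `S`. -/
theorem stmt1 {α : Type*} [DecidableEq α] (U : Finset α) (S : Finset (Finset α))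
    (T : Finset (Finset α)) (hT : T = U.image (fun x => {x}))
    (Cp Cq : Finset (Finset α))
    (hCp : Cp ⊆ S ∪ T) (hCq : Cq ⊆ S ∪ T)
    (hcovp : ∀ x ∈ U, ∃ A ∈ Cp, x ∈ A)
    (hcovq : ∀ x ∈ U, ∃ A ∈ Cq, x ∈ A)
    (hdisj : Disjoint Cp Cq) :
    (Cp ∪ Cq) \ T ⊆ S ∧ ∀ x ∈ U, ∃ A ∈ (Cp ∪ Cq) \ T, x ∈ A := by
  have hsing : ∀ A ∈ T, ∀ x ∈ A, A = {x} := by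
    intro A hA x hx
    subst hT
    obtain ⟨y, _, rfl⟩ := Finset.mem_image.mp hA
    simp_all
  constructor
  · intro A hA
    rw [Finset.mem_sdiff, Finset.mem_union] at hA
    rcases hA with ⟨hA1 | hA1, hA2⟩
    · rcases Finset.mem_union.mp (hCp hA1) with h | h
      · exact h
      · exact absurd h hA2
    · rcases Finset.mem_union.mp (hCq hA1) with h | h
      · exact h
      · exact absurd h hA2
  · intro x hx
    obtain ⟨Ap, hAp, hxAp⟩ := hcovp x hx
    obtain ⟨Aq, hAq, hxAq⟩ := hcovq x hx
    by_cases hpT : Ap ∈ T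
    · by_cases hqT : Aq ∈ T
      · exfalso
        have h1 := hsing Ap hpT x hxAp
        have h2 := hsing Aq hqT x hxAq
        exact Finset.disjoint_left.mp hdisj hAp (h1 ▸ h2 ▸ hAq)
      · exact ⟨Aq, Finset.mem_sdiff.mpr ⟨Finset.mem_union_right _ hAq, hqT⟩, hxAq⟩
    · exact ⟨Ap, Finset.mem_sdiff.mpr ⟨Finset.mem_union_left _ hAp, hpT⟩, hxAp⟩
end

section
/- Let each of |S| vertices of a hypergraph with n hyperedges be colored independently and uniformly at random with one of ℓ colors, where ℓ = F_min / ln(n ln n), F_min being the minimum hyperedge size. Then for any hyperedge e and color c, the probability that e contains no vertex of color c is less than 1/(n ln n), and consequently the expected number of colors missing from at least one hyperedge is at most ℓ / ln n. -/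
open Finset in
private lemma count_lemma' {V : Type*} [Fintype V] [DecidableEq V] (e : Finset V) {ℓ : ℕ} (c : Fin ℓ) :
    (Finset.univ.filter (fun f : V → Fin ℓ => ∀ v ∈ e, f v ≠ c)).card
      = (ℓ - 1) ^ e.card * ℓ ^ (Fintype.card V - e.card) := by
  have h : Finset.univ.filter (fun f : V → Fin ℓ => ∀ v ∈ e, f v ≠ c)
      = Fintype.piFinset (fun v => if v ∈ e then ({c}ᶜ : Finset (Fin ℓ)) else Finset.univ) := by
    ext f
    simp only [mem_filter, mem_univ, true_and, Fintype.mem_piFinset]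
    constructor
    · intro h v
      by_cases hv : v ∈ e <;> simp [hv, h v]
    · intro h v hv
      have := h v
      simp [hv] at this
      exact this
  rw [h, Fintype.card_piFinset]
  rw [← Finset.prod_filter_mul_prod_filter_not Finset.univ (· ∈ e)]
  simp only [filter_mem_eq_inter, univ_inter]
  have h1 : ∀ v ∈ e, (if v ∈ e then ({c}ᶜ : Finset (Fin ℓ)) else Finset.univ).card = ℓ - 1 := by
    intro v hv; simp [hv, card_compl]
  have h2 : ∀ v ∈ Finset.univ.filter (fun v => v ∉ e),
      (if v ∈ e then ({c}ᶜ : Finset (Fin ℓ)) else Finset.univ).card = ℓ := by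
    intro v hv; simp at hv; simp [hv]
  rw [Finset.prod_congr rfl h1, Finset.prod_congr rfl h2, Finset.prod_const, Finset.prod_const]
  congr 1
  rw [Finset.filter_not, Finset.filter_mem_eq_inter, univ_inter, card_sdiff_of_subset (subset_univ e), card_univ]

private lemma nln_gt_one' {n : ℕ} (hn2 : 2 ≤ n) : (1:ℝ) < n * Real.log n := by
  have h2 : (2:ℝ) ≤ n := by exact_mod_cast hn2
  have hlog : Real.log 2 ≤ Real.log n := Real.log_le_log (by norm_num) h2
  have hl2 : (0.6931471803 : ℝ) < Real.log 2 := Real.log_two_gt_d9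
  nlinarith [Real.log_nonneg (by linarith : (1:ℝ) ≤ n)]

private lemma prob_lt' {n Fmin ℓ k : ℕ} (hn2 : 2 ≤ n) (hℓ1 : 1 ≤ ℓ)
    (hℓ : (ℓ : ℝ) ≤ (Fmin : ℝ) / Real.log (n * Real.log n)) (hk : Fmin ≤ k) :
    ((↑(ℓ - 1) : ℝ) / ℓ) ^ k < 1 / (n * Real.log n) := by
  have hnl1 : (1:ℝ) < n * Real.log n := nln_gt_one' hn2
  have hnl0 : (0:ℝ) < n * Real.log n := by linarith
  have hL : 0 < Real.log (n * Real.log n) := Real.log_pos hnl1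
  have hℓR : (0:ℝ) < ℓ := by exact_mod_cast hℓ1
  have hℓL : (ℓ:ℝ) * Real.log (n * Real.log n) ≤ Fmin := by
    rw [← le_div_iff₀ hL]; exact hℓ
  have hFpos : (0:ℝ) < Fmin := by nlinarith
  have hF1 : 1 ≤ Fmin := by exact_mod_cast Nat.one_le_iff_ne_zero.mpr (by
    intro h; rw [h] at hFpos; simp at hFpos)
  have hk1 : 1 ≤ k := le_trans hF1 hk
  have hrhs : 1 / ((n:ℝ) * Real.log n) = Real.exp (-(Real.log (n * Real.log n))) := by
    rw [Real.exp_neg, Real.exp_log hnl0, one_div]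
  rcases eq_or_lt_of_le hℓ1 with h1 | h2
  · have : ℓ - 1 = 0 := by omega
    rw [this]
    simp only [Nat.cast_zero, zero_div, zero_pow (by omega : k ≠ 0)]
    positivity
  · have hc : (↑(ℓ - 1) : ℝ) = (ℓ:ℝ) - 1 := by
      push_cast [Nat.cast_sub hℓ1]; ring
    set r : ℝ := (↑(ℓ - 1) : ℝ) / ℓ with hr
    have hr0 : 0 ≤ r := by positivity
    have hrval : r = 1 - 1/ℓ := by rw [hr, hc]; field_simp
    have hinv : (0:ℝ) < 1/ℓ := by positivity
    have hr1 : r ≤ 1 := by rw [hrval]; linarith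
    have step1 : r ^ k ≤ r ^ Fmin := pow_le_pow_of_le_one hr0 hr1 hk
    have hlt : r < Real.exp (-(1/ℓ)) := by
      rw [hrval]
      have := Real.add_one_lt_exp (x := -(1/(ℓ:ℝ))) (neg_ne_zero.mpr (by positivity))
      linarith
    have step2 : r ^ Fmin < (Real.exp (-(1/ℓ))) ^ Fmin :=
      pow_lt_pow_left₀ hlt hr0 (by omega)
    have hexp : (Real.exp (-(1/(ℓ:ℝ)))) ^ Fmin = Real.exp (-(Fmin/ℓ)) := by
      rw [← Real.exp_nat_mul]; ring_nf
    have step3 : Real.exp (-((Fmin:ℝ)/ℓ)) ≤ Real.exp (-(Real.log (n * Real.log n))) := by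
      apply Real.exp_le_exp.mpr
      have : Real.log (n * Real.log n) ≤ (Fmin:ℝ)/ℓ := by
        rw [le_div_iff₀ hℓR]; nlinarith
      linarith
    rw [hrhs]
    calc r ^ k ≤ r ^ Fmin := step1
      _ < _ := step2
      _ = _ := hexp
      _ ≤ _ := step3

private lemma ratio_eq' {ℓ k N : ℕ} (hℓ1 : 1 ≤ ℓ) (hk : k ≤ N) :
    (((ℓ - 1) ^ k * ℓ ^ (N - k) : ℕ) : ℝ) / (ℓ : ℝ) ^ N = ((↑(ℓ - 1) : ℝ) / ℓ) ^ k := by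
  have hℓ0 : (ℓ:ℝ) ≠ 0 := by positivity
  have hN : (ℓ:ℝ) ^ N = (ℓ:ℝ) ^ k * (ℓ:ℝ) ^ (N - k) := by
    rw [← pow_add]; congr 1; omega
  push_cast
  rw [div_pow, hN]
  rw [div_eq_div_iff (by positivity) (by positivity)]
  ring

open Finset in
/-- Color each of the vertices independently and uniformly at random with one of `ℓ`
colors, where `ℓ ≤ F_min / ln (n ln n)`.  Then for any hyperedge `e` and color `c`, the
probability that `e` contains no vertex of color `c` is less than `1/(n ln n)`, and the
expected number of colors missing from at least one hyperedge is at most `ℓ / ln n`. -/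
theorem stmt3 {V : Type*} [Fintype V] [DecidableEq V]
    (E : Finset (Finset V)) (n Fmin ℓ : ℕ)
    (hn : E.card = n) (hn2 : 2 ≤ n) (hℓ1 : 1 ≤ ℓ)
    (hF : ∀ e ∈ E, Fmin ≤ e.card)
    (hℓ : (ℓ : ℝ) ≤ (Fmin : ℝ) / Real.log (n * Real.log n)) :
    (∀ e ∈ E, ∀ c : Fin ℓ,
      ((Finset.univ.filter (fun f : V → Fin ℓ => ∀ v ∈ e, f v ≠ c)).card : ℝ) /
        (ℓ : ℝ) ^ Fintype.card V < 1 / (n * Real.log n)) ∧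
    (∑ f : V → Fin ℓ,
        ((Finset.univ.filter (fun c : Fin ℓ => ∃ e ∈ E, ∀ v ∈ e, f v ≠ c)).card : ℝ)) /
      (ℓ : ℝ) ^ Fintype.card V ≤ (ℓ : ℝ) / Real.log n := by
  have part1 : ∀ e ∈ E, ∀ c : Fin ℓ,
      ((Finset.univ.filter (fun f : V → Fin ℓ => ∀ v ∈ e, f v ≠ c)).card : ℝ) /
        (ℓ : ℝ) ^ Fintype.card V < 1 / (n * Real.log n) := by
    intro e he c
    have hcard : e.card ≤ Fintype.card V := by
      simpa [Finset.card_univ] using Finset.card_le_univ e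
    rw [count_lemma' e c, ratio_eq' hℓ1 hcard]
    exact prob_lt' hn2 hℓ1 hℓ (hF e he)
  refine ⟨part1, ?_⟩
  have hnl1 : (1:ℝ) < n * Real.log n := nln_gt_one' hn2
  have hnl0 : (0:ℝ) < n * Real.log n := by linarith
  have hn0 : (0:ℝ) < n := by positivity
  have hln0 : (0:ℝ) < Real.log n := by
    apply Real.log_pos; exact_mod_cast (by omega : 1 < n)
  have hPow : (0:ℝ) < (ℓ : ℝ) ^ Fintype.card V := by positivity
  rw [div_le_iff₀ hPow]
  have hswap : (∑ f : V → Fin ℓ,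
      ((Finset.univ.filter (fun c : Fin ℓ => ∃ e ∈ E, ∀ v ∈ e, f v ≠ c)).card : ℝ))
      = ∑ c : Fin ℓ,
        ((Finset.univ.filter (fun f : V → Fin ℓ => ∃ e ∈ E, ∀ v ∈ e, f v ≠ c)).card : ℝ) := by
    simp_rw [Finset.card_filter]
    push_cast
    rw [Finset.sum_comm]
  rw [hswap]
  have hc : ∀ c : Fin ℓ,
      ((Finset.univ.filter (fun f : V → Fin ℓ => ∃ e ∈ E, ∀ v ∈ e, f v ≠ c)).card : ℝ)
        ≤ n * ((ℓ : ℝ) ^ Fintype.card V / (n * Real.log n)) := by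
    intro c
    have hsub : Finset.univ.filter (fun f : V → Fin ℓ => ∃ e ∈ E, ∀ v ∈ e, f v ≠ c) ⊆
        E.biUnion (fun e => Finset.univ.filter (fun f : V → Fin ℓ => ∀ v ∈ e, f v ≠ c)) := by
      intro f hf
      simp only [mem_filter, mem_univ, true_and] at hf
      obtain ⟨e, he, hfe⟩ := hf
      exact Finset.mem_biUnion.mpr ⟨e, he, Finset.mem_filter.mpr ⟨Finset.mem_univ f, hfe⟩⟩
    have h1 : (Finset.univ.filter (fun f : V → Fin ℓ => ∃ e ∈ E, ∀ v ∈ e, f v ≠ c)).card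
        ≤ ∑ e ∈ E, (Finset.univ.filter (fun f : V → Fin ℓ => ∀ v ∈ e, f v ≠ c)).card :=
      le_trans (Finset.card_le_card hsub) Finset.card_biUnion_le
    calc ((Finset.univ.filter (fun f : V → Fin ℓ => ∃ e ∈ E, ∀ v ∈ e, f v ≠ c)).card : ℝ)
        ≤ ∑ e ∈ E, ((Finset.univ.filter (fun f : V → Fin ℓ => ∀ v ∈ e, f v ≠ c)).card : ℝ) := by
          exact_mod_cast h1
      _ ≤ ∑ _e ∈ E, ((ℓ : ℝ) ^ Fintype.card V / (n * Real.log n)) := by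
          apply Finset.sum_le_sum
          intro e he
          have := part1 e he c
          rw [div_lt_iff₀ hPow] at this
          have heq : 1 / ((n:ℝ) * Real.log n) * (ℓ : ℝ) ^ Fintype.card V
              = (ℓ : ℝ) ^ Fintype.card V / (n * Real.log n) := by ring
          linarith [this, heq ▸ this]
      _ = n * ((ℓ : ℝ) ^ Fintype.card V / (n * Real.log n)) := by
          rw [Finset.sum_const, hn, nsmul_eq_mul]
  calc (∑ c : Fin ℓ,
      ((Finset.univ.filter (fun f : V → Fin ℓ => ∃ e ∈ E, ∀ v ∈ e, f v ≠ c)).card : ℝ))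
      ≤ ∑ _c : Fin ℓ, (n : ℝ) * ((ℓ : ℝ) ^ Fintype.card V / (n * Real.log n)) :=
        Finset.sum_le_sum (fun c _ => hc c)
    _ = ℓ * ((n : ℝ) * ((ℓ : ℝ) ^ Fintype.card V / (n * Real.log n))) := by
        rw [Finset.sum_const, Finset.card_univ, Fintype.card_fin, nsmul_eq_mul]
    _ = (ℓ : ℝ) / Real.log n * (ℓ : ℝ) ^ Fintype.card V := by
        field_simp
end

section
/- Every hypergraph in which every hyperedge has at least F_min vertices admits a vertex coloring with at least ℓ − ⌊ℓ/ln n⌋ colors such that each of these colors appears in every hyperedge, where ℓ = ⌊F_min / ln(n ln n)⌋ and n ≥ 2 is the number of hyperedges. (Existence via the probabilistic method: the expected number of 'invalid' colors is less than ℓ/ln n.) -/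
open Finset

/-- Every hypergraph with `n ≥ 2` hyperedges, each of size at least `F_min`, admits a
vertex coloring with `ℓ = ⌊F_min / ln(n ln n)⌋` colors in which at least
`ℓ − ⌊ℓ/ln n⌋` of the colors appear in every hyperedge. -/
theorem stmt4 {V : Type*} (E : Finset (Finset V)) (n Fmin ℓ : ℕ)
    (hn : E.card = n) (hn2 : 2 ≤ n)
    (hF : ∀ e ∈ E, Fmin ≤ e.card)
    (hℓdef : ℓ = ⌊(Fmin : ℝ) / Real.log (n * Real.log n)⌋₊)
    (hℓ1 : 1 ≤ ℓ) :
    ∃ (f : V → Fin ℓ) (good : Finset (Fin ℓ)),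
      ℓ - ⌊(ℓ : ℝ) / Real.log n⌋₊ ≤ good.card ∧
      ∀ c ∈ good, ∀ e ∈ E, ∃ v ∈ e, f v = c := by
  classical
  -- basic analytic facts
  have hn1 : (1:ℝ) < (n:ℝ) := by exact_mod_cast Nat.lt_of_lt_of_le one_lt_two hn2
  have hlogn : 0 < Real.log n := Real.log_pos hn1
  have h2 : (2:ℝ) ≤ (n:ℝ) := by exact_mod_cast hn2
  have hlog2 : Real.log 2 ≤ Real.log n := Real.log_le_log (by norm_num) h2
  have hnln1 : (1:ℝ) < (n:ℝ) * Real.log n := by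
    nlinarith [Real.log_two_gt_d9]
  have hL : 0 < Real.log ((n:ℝ) * Real.log n) := Real.log_pos hnln1
  have hℓpos : (0:ℝ) < (ℓ:ℝ) := by exact_mod_cast hℓ1
  have hℓL : (ℓ:ℝ) * Real.log ((n:ℝ) * Real.log n) ≤ (Fmin:ℝ) := by
    have h := Nat.floor_le (R := ℝ)
      (div_nonneg (Nat.cast_nonneg Fmin) hL.le)
    rw [← hℓdef] at h
    rw [← le_div_iff₀ hL] at *
    exact h
  have hLF : Real.log ((n:ℝ) * Real.log n) ≤ (Fmin:ℝ) / (ℓ:ℝ) :=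
    (le_div_iff₀ hℓpos).mpr (by linarith [hℓL])
  -- setup
  set U : Finset V := E.sup id with hU
  have hsub : ∀ e ∈ E, e ⊆ U := fun e he => Finset.le_sup (f := id) he
  haveI : Nonempty (Fin ℓ) := ⟨⟨0, hℓ1⟩⟩
  let ext : (↥U → Fin ℓ) → V → Fin ℓ := fun g v => if h : v ∈ U then g ⟨v, h⟩ else ⟨0, hℓ1⟩
  let bad : (↥U → Fin ℓ) → Finset (Fin ℓ) := fun g =>
    Finset.univ.filter (fun c => ∃ e ∈ E, ∀ v ∈ e, ext g v ≠ c)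
  -- counting per (c, e)
  have hcount : ∀ c : Fin ℓ, ∀ e ∈ E,
      (Finset.univ.filter (fun g : ↥U → Fin ℓ => ∀ v ∈ e, ext g v ≠ c)).card
        = (ℓ - 1) ^ e.card * ℓ ^ (U.card - e.card) := by
    intro c e he
    have hes := hsub e he
    have hset : (Finset.univ.filter (fun g : ↥U → Fin ℓ => ∀ v ∈ e, ext g v ≠ c))
        = Fintype.piFinset (fun v : ↥U => if (v : V) ∈ e then Finset.univ.erase c else Finset.univ) := by
      ext g
      simp only [Finset.mem_filter, Finset.mem_univ, true_and, Fintype.mem_piFinset]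
      constructor
      · intro h v
        by_cases hv : (v : V) ∈ e
        · simp only [hv, if_true, Finset.mem_erase, Finset.mem_univ, and_true]
          have := h v hv
          simpa [ext, v.2] using this
        · simp [hv]
      · intro h v hv
        have hvU : v ∈ U := hes hv
        have := h ⟨v, hvU⟩
        simp only [hv, if_true, Finset.mem_erase, Finset.mem_univ, and_true] at this
        simpa [ext, hvU] using this
    rw [hset, Fintype.card_piFinset]
    have : ∀ v : ↥U, ((if (v : V) ∈ e then Finset.univ.erase c else Finset.univ) : Finset (Fin ℓ)).card
        = if (v : V) ∈ e then ℓ - 1 else ℓ := by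
      intro v
      by_cases hv : (v : V) ∈ e <;>
        simp [hv, Finset.card_erase_of_mem, Finset.card_fin]
    simp only [this]
    rw [Finset.prod_coe_sort U (fun v => if v ∈ e then ℓ - 1 else ℓ)]
    rw [Finset.prod_ite, Finset.prod_const, Finset.prod_const]
    congr 1
    · congr 1
      rw [Finset.filter_mem_eq_inter, Finset.inter_eq_right.mpr hes]
    · congr 1
      have : Finset.filter (fun v => v ∉ e) U = U \ e := by
        ext v; simp [Finset.mem_sdiff]
      rw [this, Finset.card_sdiff_of_subset hes]
  -- real bound per edge
  have hnl0 : (0:ℝ) < (n:ℝ) * Real.log n := lt_trans one_pos hnln1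
  have hreal : ∀ e ∈ E, (((ℓ - 1) ^ e.card * ℓ ^ (U.card - e.card) : ℕ) : ℝ)
      ≤ (ℓ:ℝ) ^ U.card / ((n:ℝ) * Real.log n) := by
    intro e he
    have hec : e.card ≤ U.card := Finset.card_le_card (hsub e he)
    have hF' : Fmin ≤ e.card := hF e he
    push_cast [Nat.cast_sub hℓ1]
    have hsplit : (ℓ:ℝ) ^ U.card = (ℓ:ℝ) ^ e.card * (ℓ:ℝ) ^ (U.card - e.card) := by
      rw [← pow_add, Nat.add_sub_cancel' hec]
    have h1 : ((ℓ:ℝ) - 1) ^ e.card ≤ (ℓ:ℝ) ^ e.card / ((n:ℝ) * Real.log n) := by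
      have hℓ1' : (1:ℝ) ≤ (ℓ:ℝ) := by exact_mod_cast hℓ1
      have hexp1 : (ℓ:ℝ) - 1 ≤ (ℓ:ℝ) * Real.exp (-(1/(ℓ:ℝ))) := by
        have h := Real.add_one_le_exp (-(1/(ℓ:ℝ)))
        have h2 : (ℓ:ℝ) * (-(1/(ℓ:ℝ)) + 1) ≤ (ℓ:ℝ) * Real.exp (-(1/(ℓ:ℝ))) :=
          mul_le_mul_of_nonneg_left h (le_of_lt hℓpos)
        have h3 : (ℓ:ℝ) * (-(1/(ℓ:ℝ)) + 1) = (ℓ:ℝ) - 1 := by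
          field_simp; ring
        linarith
      have hnn : (0:ℝ) ≤ (ℓ:ℝ) - 1 := by linarith
      calc ((ℓ:ℝ) - 1) ^ e.card ≤ ((ℓ:ℝ) * Real.exp (-(1/(ℓ:ℝ)))) ^ e.card :=
            pow_le_pow_left₀ hnn hexp1 e.card
        _ = (ℓ:ℝ) ^ e.card * Real.exp (-(1/(ℓ:ℝ))) ^ e.card := mul_pow _ _ _
        _ = (ℓ:ℝ) ^ e.card * Real.exp ((e.card : ℕ) * (-(1/(ℓ:ℝ)))) := by
            rw [Real.exp_nat_mul]
        _ ≤ (ℓ:ℝ) ^ e.card * Real.exp (-(Real.log ((n:ℝ) * Real.log n))) := by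
            apply mul_le_mul_of_nonneg_left _ (by positivity)
            apply Real.exp_le_exp.mpr
            have hFc : (Fmin:ℝ) ≤ (e.card:ℝ) := by exact_mod_cast hF'
            have : (e.card:ℝ) * (-(1/(ℓ:ℝ))) = -((e.card:ℝ)/(ℓ:ℝ)) := by ring
            rw [this]
            have h4 : (Fmin:ℝ)/(ℓ:ℝ) ≤ (e.card:ℝ)/(ℓ:ℝ) :=
              div_le_div_of_nonneg_right hFc hℓpos.le
            linarith
        _ = (ℓ:ℝ) ^ e.card / ((n:ℝ) * Real.log n) := by
            rw [Real.exp_neg, Real.exp_log hnl0, div_eq_mul_inv]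
    calc ((ℓ:ℝ) - 1) ^ e.card * (ℓ:ℝ) ^ (U.card - e.card)
        ≤ ((ℓ:ℝ) ^ e.card / ((n:ℝ) * Real.log n)) * (ℓ:ℝ) ^ (U.card - e.card) :=
          mul_le_mul_of_nonneg_right h1 (by positivity)
      _ = (ℓ:ℝ) ^ U.card / ((n:ℝ) * Real.log n) := by rw [hsplit]; ring
  -- union bound per color
  have hub : ∀ c : Fin ℓ,
      (Finset.univ.filter (fun g : ↥U → Fin ℓ => ∃ e ∈ E, ∀ v ∈ e, ext g v ≠ c)).card
        ≤ ∑ e ∈ E, (ℓ - 1) ^ e.card * ℓ ^ (U.card - e.card) := by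
    intro c
    calc (Finset.univ.filter (fun g : ↥U → Fin ℓ => ∃ e ∈ E, ∀ v ∈ e, ext g v ≠ c)).card
        ≤ (E.biUnion (fun e => Finset.univ.filter
            (fun g : ↥U → Fin ℓ => ∀ v ∈ e, ext g v ≠ c))).card := by
          apply Finset.card_le_card
          intro g hg
          simp only [Finset.mem_filter, Finset.mem_univ, true_and, Finset.mem_biUnion] at hg ⊢
          obtain ⟨e, he, h⟩ := hg
          exact ⟨e, he, h⟩
      _ ≤ ∑ e ∈ E, (Finset.univ.filter
            (fun g : ↥U → Fin ℓ => ∀ v ∈ e, ext g v ≠ c)).card := Finset.card_biUnion_le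
      _ = ∑ e ∈ E, (ℓ - 1) ^ e.card * ℓ ^ (U.card - e.card) :=
          Finset.sum_congr rfl (fun e he => hcount c e he)
  -- total sum bound (natural numbers, then cast)
  have htotalN : ∑ g : ↥U → Fin ℓ, (bad g).card
      ≤ ∑ c : Fin ℓ, ∑ e ∈ E, (ℓ - 1) ^ e.card * ℓ ^ (U.card - e.card) := by
    have h1 : ∀ g : ↥U → Fin ℓ, (bad g).card
        = ∑ c : Fin ℓ, if (∃ e ∈ E, ∀ v ∈ e, ext g v ≠ c) then 1 else 0 := by
      intro g
      simp only [bad]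
      rw [Finset.card_filter]
    calc ∑ g : ↥U → Fin ℓ, (bad g).card
        = ∑ g : ↥U → Fin ℓ, ∑ c : Fin ℓ,
            if (∃ e ∈ E, ∀ v ∈ e, ext g v ≠ c) then 1 else 0 := by
          exact Finset.sum_congr rfl (fun g _ => h1 g)
      _ = ∑ c : Fin ℓ, ∑ g : ↥U → Fin ℓ,
            if (∃ e ∈ E, ∀ v ∈ e, ext g v ≠ c) then 1 else 0 := Finset.sum_comm
      _ = ∑ c : Fin ℓ, (Finset.univ.filter
            (fun g : ↥U → Fin ℓ => ∃ e ∈ E, ∀ v ∈ e, ext g v ≠ c)).card := by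
          refine Finset.sum_congr rfl (fun c _ => ?_)
          rw [Finset.card_filter]
      _ ≤ _ := Finset.sum_le_sum (fun c _ => hub c)
  -- cast to the reals and bound
  have htotal : (∑ g : ↥U → Fin ℓ, ((bad g).card : ℝ))
      ≤ (ℓ:ℝ) ^ U.card * ((ℓ:ℝ) / Real.log n) := by
    have hcast : (∑ g : ↥U → Fin ℓ, ((bad g).card : ℝ))
        = ((∑ g : ↥U → Fin ℓ, (bad g).card : ℕ) : ℝ) := by push_cast; rfl
    rw [hcast]
    calc ((∑ g : ↥U → Fin ℓ, (bad g).card : ℕ) : ℝ)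
        ≤ ((∑ c : Fin ℓ, ∑ e ∈ E, (ℓ - 1) ^ e.card * ℓ ^ (U.card - e.card) : ℕ) : ℝ) := by
          exact_mod_cast htotalN
      _ = ∑ c : Fin ℓ, ∑ e ∈ E, (((ℓ - 1) ^ e.card * ℓ ^ (U.card - e.card) : ℕ) : ℝ) := by
          push_cast; rfl
      _ ≤ ∑ c : Fin ℓ, ∑ e ∈ E, (ℓ:ℝ) ^ U.card / ((n:ℝ) * Real.log n) := by
          refine Finset.sum_le_sum (fun c _ => Finset.sum_le_sum (fun e he => hreal e he))
      _ = (ℓ:ℝ) * ((n:ℝ) * ((ℓ:ℝ) ^ U.card / ((n:ℝ) * Real.log n))) := by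
          rw [Finset.sum_const, Finset.sum_const, hn]
          simp [Finset.card_univ, nsmul_eq_mul, mul_assoc]
      _ = (ℓ:ℝ) ^ U.card * ((ℓ:ℝ) / Real.log n) := by
          field_simp
  -- averaging: some coloring has few bad colors
  have hexg : ∃ g : ↥U → Fin ℓ, ((bad g).card : ℝ) ≤ (ℓ:ℝ) / Real.log n := by
    by_contra hcon
    push_neg at hcon
    have hne : (Finset.univ : Finset (↥U → Fin ℓ)).Nonempty := Finset.univ_nonempty
    have hcardfun : (Fintype.card (↥U → Fin ℓ) : ℝ) = (ℓ:ℝ) ^ U.card := by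
      rw [Fintype.card_fun]
      push_cast [Fintype.card_coe, Fintype.card_fin]
      rfl
    have hlt : (ℓ:ℝ) ^ U.card * ((ℓ:ℝ) / Real.log n)
        < ∑ g : ↥U → Fin ℓ, ((bad g).card : ℝ) := by
      have := Finset.sum_lt_sum_of_nonempty hne (fun g _ => hcon g)
      rw [Finset.sum_const, nsmul_eq_mul, Finset.card_univ, hcardfun] at this
      exact this
    linarith
  obtain ⟨g, hg⟩ := hexg
  refine ⟨ext g, Finset.univ \ bad g, ?_, ?_⟩
  · rw [Finset.card_sdiff_of_subset (Finset.subset_univ _), Finset.card_univ, Fintype.card_fin]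
    exact Nat.sub_le_sub_left (Nat.le_floor hg) ℓ
  · intro c hc e he
    simp only [bad, Finset.mem_sdiff, Finset.mem_filter, Finset.mem_univ, true_and] at hc
    push_neg at hc
    exact hc e he
end

section
/- Let a hypergraph have hyperedges of size at least F_min, and suppose each hyperedge intersects at most Δ other hyperedges. If the vertices are colored independently and uniformly at random with ℓ = ⌊F_min / ln(e·F_min·Δ)⌋ colors (ℓ ≥ 1, F_min·Δ ≥ 1), then by the Lovász Local Lemma there is a positive probability that every color appears in every hyperedge; hence a polychromatic coloring with ℓ colors exists, and equivalently ℓ disjoint set covers exist. -/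
set_option linter.unusedSectionVars false
set_option maxHeartbeats 1000000

open Finset

section LLLabstract

variable {I Ω : Type*} [DecidableEq Ω] [Fintype Ω] [DecidableEq I]

/-- the set of outcomes avoiding all bad events indexed by `T` -/
def llGood (bad : I → Finset Ω) (T : Finset I) : Finset Ω :=
  Finset.univ.filter (fun ω => ∀ j ∈ T, ω ∉ bad j)

lemma mem_llGood {bad : I → Finset Ω} {T : Finset I} {ω : Ω} :
    ω ∈ llGood bad T ↔ ∀ j ∈ T, ω ∉ bad j := by
  simp [llGood]

lemma llGood_empty (bad : I → Finset Ω) : llGood bad (∅ : Finset I) = Finset.univ := by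
  ext ω; simp [mem_llGood]

lemma llGood_insert (bad : I → Finset Ω) (j : I) (T : Finset I) :
    llGood bad (insert j T) = llGood bad T \ bad j := by
  ext ω
  simp only [mem_llGood, Finset.mem_sdiff, Finset.mem_insert]
  constructor
  · intro h; exact ⟨fun k hk => h k (Or.inr hk), h j (Or.inl rfl)⟩
  · rintro ⟨h1, h2⟩ k (rfl | hk)
    · exact h2
    · exact h1 k hk

lemma llGood_anti (bad : I → Finset Ω) {T T' : Finset I} (h : T ⊆ T') :
    llGood bad T' ⊆ llGood bad T := by
  intro ω hω
  rw [mem_llGood] at hω ⊢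
  exact fun j hj => hω j (h hj)

lemma card_llGood_insert (bad : I → Finset Ω) (j : I) (T : Finset I) :
    ((llGood bad (insert j T)).card : ℝ)
      = (llGood bad T).card - (bad j ∩ llGood bad T).card := by
  rw [llGood_insert, Finset.inter_comm]
  have h := Finset.card_sdiff_add_card_inter (llGood bad T) (bad j)
  have h2 : ((llGood bad T \ bad j).card : ℝ) + ((llGood bad T ∩ bad j).card : ℝ)
      = (llGood bad T).card := by exact_mod_cast congrArg (Nat.cast : ℕ → ℝ) h
  linarith

theorem LLL_main {d : ℕ} {x : ℝ} [Nonempty Ω] (bad : I → Finset Ω) (N : I → Finset I)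
    (hx0 : 0 ≤ x) (hx1 : x < 1)
    (hNself : ∀ i, i ∈ N i) (hNd : ∀ i, (N i).card ≤ d + 1)
    (hp : ∀ i, ((bad i).card : ℝ) ≤ x * (1 - x) ^ d * Fintype.card Ω)
    (hind : ∀ i (T : Finset I), (∀ j ∈ T, j ∉ N i) →
      (((bad i) ∩ llGood bad T).card : ℝ) * Fintype.card Ω
        = (bad i).card * (llGood bad T).card) :
    ∀ n (T : Finset I), T.card ≤ n → ∀ i,
      (((bad i) ∩ llGood bad T).card : ℝ) ≤ x * (llGood bad T).card := by
  intro n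
  induction n with
  | zero =>
    intro T hT i
    have hTe : T = ∅ := Finset.card_eq_zero.mp (Nat.le_zero.mp hT)
    subst hTe
    rw [llGood_empty, Finset.inter_univ, Finset.card_univ]
    calc ((bad i).card : ℝ) ≤ x * (1 - x) ^ d * Fintype.card Ω := hp i
      _ ≤ x * Fintype.card Ω := by
          have h1 : (1 - x) ^ d ≤ 1 := pow_le_one₀ (by linarith) (by linarith)
          have hc : (0:ℝ) ≤ Fintype.card Ω := Nat.cast_nonneg _
          have := mul_le_mul_of_nonneg_right (mul_le_mul_of_nonneg_left h1 hx0) hc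
          simpa using this
  | succ n ih =>
    intro T hT i
    by_cases hiT : i ∈ T
    · have h0 : bad i ∩ llGood bad T = ∅ := by
        ext ω
        simp only [Finset.mem_inter, mem_llGood, Finset.notMem_empty, iff_false, not_and]
        intro h1 h2; exact h2 i hiT h1
      rw [h0]
      simp only [Finset.card_empty, Nat.cast_zero]
      positivity
    · set T1 := T ∩ N i with hT1def
      set T2 := T \ N i with hT2def
      have hT2sub : ∀ j ∈ T2, j ∉ N i := fun j hj => (Finset.mem_sdiff.mp hj).2
      have hOmega : (0:ℝ) < Fintype.card Ω := by
        have := Fintype.card_pos (α := Ω); exact_mod_cast this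
      have helper : ∀ U : Finset I, U ⊆ T1 →
          (1 - x) ^ U.card * ((llGood bad T2).card : ℝ) ≤ (llGood bad (T2 ∪ U)).card := by
        intro U
        induction U using Finset.induction_on with
        | empty => intro _; simp
        | @insert j U hjU ihU =>
          intro hsub
          have hUsub : U ⊆ T1 := (Finset.insert_subset_iff.mp hsub).2
          have hjT1 : j ∈ T1 := (Finset.insert_subset_iff.mp hsub).1
          have hjT : j ∈ T := (Finset.mem_inter.mp hjT1).1
          have hjN : j ∈ N i := (Finset.mem_inter.mp hjT1).2
          have hjT2U : j ∉ T2 ∪ U := by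
            simp only [Finset.mem_union]
            rintro (h | h)
            · exact (Finset.mem_sdiff.mp h).2 hjN
            · exact hjU h
          have hcard : (T2 ∪ U).card ≤ n := by
            have hsubT : T2 ∪ U ⊆ T.erase j := by
              intro k hk
              rw [Finset.mem_erase]
              refine ⟨fun hkj => hjT2U (hkj ▸ hk), ?_⟩
              rcases Finset.mem_union.mp hk with h | h
              · exact (Finset.mem_sdiff.mp h).1
              · exact (Finset.mem_inter.mp (hUsub h)).1
            have := Finset.card_le_card hsubT
            have := Finset.card_erase_of_mem hjT
            omega
          have key := ih (T2 ∪ U) hcard j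
          have hins : T2 ∪ insert j U = insert j (T2 ∪ U) := by
            ext k
            simp only [Finset.mem_union, Finset.mem_insert]
            tauto
          rw [hins, Finset.card_insert_of_notMem hjU, card_llGood_insert]
          have hih := ihU hUsub
          have hx' : (0:ℝ) ≤ 1 - x := by linarith
          have step1 : (1 - x) ^ (U.card + 1) * ((llGood bad T2).card : ℝ)
              ≤ (1 - x) * ((llGood bad (T2 ∪ U)).card : ℝ) := by
            have h := mul_le_mul_of_nonneg_left hih hx'
            calc (1 - x) ^ (U.card + 1) * ((llGood bad T2).card : ℝ)
                = (1 - x) * ((1 - x) ^ U.card * ((llGood bad T2).card : ℝ)) := by ring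
              _ ≤ _ := h
          have hexp : (1 - x) * ((llGood bad (T2 ∪ U)).card : ℝ)
              = ((llGood bad (T2 ∪ U)).card : ℝ) - x * ((llGood bad (T2 ∪ U)).card : ℝ) := by
            ring
          linarith
      have hUnion : T2 ∪ T1 = T := by
        ext k
        simp only [hT1def, hT2def, Finset.mem_union, Finset.mem_sdiff, Finset.mem_inter]
        tauto
      have hT1d : T1.card ≤ d := by
        have hsub : T1 ⊆ (N i).erase i := by
          intro k hk
          rw [Finset.mem_erase]
          exact ⟨fun h => hiT (h ▸ (Finset.mem_inter.mp hk).1), (Finset.mem_inter.mp hk).2⟩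
        have h1 := Finset.card_le_card hsub
        have h2 := Finset.card_erase_of_mem (hNself i)
        have h3 := hNd i
        omega
      have hlow : (1 - x) ^ d * ((llGood bad T2).card : ℝ) ≤ (llGood bad T).card := by
        have h1 := helper T1 Finset.Subset.rfl
        rw [hUnion] at h1
        refine le_trans ?_ h1
        apply mul_le_mul_of_nonneg_right _ (Nat.cast_nonneg _)
        exact pow_le_pow_of_le_one (by linarith) (by linarith) hT1d
      have hmono : ((bad i ∩ llGood bad T).card : ℝ) ≤ ((bad i ∩ llGood bad T2).card : ℝ) := by
        have hsub : bad i ∩ llGood bad T ⊆ bad i ∩ llGood bad T2 :=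
          Finset.inter_subset_inter Finset.Subset.rfl
            (llGood_anti bad (show T2 ⊆ T from Finset.sdiff_subset))
        exact_mod_cast Finset.card_le_card hsub
      have hindT2 := hind i T2 hT2sub
      have hb : ((bad i ∩ llGood bad T2).card : ℝ)
          ≤ x * (1 - x) ^ d * (llGood bad T2).card := by
        have h2 : ((bad i).card : ℝ) * (llGood bad T2).card
            ≤ x * (1 - x) ^ d * Fintype.card Ω * (llGood bad T2).card :=
          mul_le_mul_of_nonneg_right (hp i) (Nat.cast_nonneg _)
        rw [← hindT2] at h2
        have h3 : ((bad i ∩ llGood bad T2).card : ℝ) * Fintype.card Ω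
            ≤ (x * (1 - x) ^ d * (llGood bad T2).card) * Fintype.card Ω := by
          nlinarith
        exact le_of_mul_le_mul_right h3 hOmega
      calc ((bad i ∩ llGood bad T).card : ℝ)
          ≤ ((bad i ∩ llGood bad T2).card : ℝ) := hmono
        _ ≤ x * (1 - x) ^ d * (llGood bad T2).card := hb
        _ = x * ((1 - x) ^ d * (llGood bad T2).card) := by ring
        _ ≤ x * (llGood bad T).card := mul_le_mul_of_nonneg_left hlow hx0

theorem LLL_lower {d : ℕ} {x : ℝ} [Nonempty Ω] (bad : I → Finset Ω) (N : I → Finset I)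
    (hx0 : 0 ≤ x) (hx1 : x < 1)
    (hNself : ∀ i, i ∈ N i) (hNd : ∀ i, (N i).card ≤ d + 1)
    (hp : ∀ i, ((bad i).card : ℝ) ≤ x * (1 - x) ^ d * Fintype.card Ω)
    (hind : ∀ i (T : Finset I), (∀ j ∈ T, j ∉ N i) →
      (((bad i) ∩ llGood bad T).card : ℝ) * Fintype.card Ω
        = (bad i).card * (llGood bad T).card) :
    ∀ T : Finset I, (1 - x) ^ T.card * (Fintype.card Ω : ℝ) ≤ (llGood bad T).card := by
  intro T
  induction T using Finset.induction_on with
  | empty => simp [llGood_empty]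
  | @insert j T hjT ihT =>
    rw [Finset.card_insert_of_notMem hjT, card_llGood_insert]
    have key := LLL_main bad N hx0 hx1 hNself hNd hp hind T.card T le_rfl j
    have hnn : (0:ℝ) ≤ ((llGood bad T).card : ℝ) := Nat.cast_nonneg _
    have hx' : (0:ℝ) ≤ 1 - x := by linarith
    have hpow : (0:ℝ) ≤ (1 - x) ^ T.card := pow_nonneg hx' _
    have step1 : (1 - x) ^ (T.card + 1) * (Fintype.card Ω : ℝ)
        ≤ (1 - x) * ((llGood bad T).card : ℝ) := by
      have h := mul_le_mul_of_nonneg_left ihT hx'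
      calc (1 - x) ^ (T.card + 1) * (Fintype.card Ω : ℝ)
          = (1 - x) * ((1 - x) ^ T.card * (Fintype.card Ω : ℝ)) := by ring
        _ ≤ _ := h
    have hexp : (1 - x) * ((llGood bad T).card : ℝ)
        = ((llGood bad T).card : ℝ) - x * ((llGood bad T).card : ℝ) := by ring
    linarith

end LLLabstract

section Product

variable {V K : Type*} [Fintype V] [DecidableEq V] [Fintype K] [DecidableEq K]

/-- `A` is determined by the coordinates in `S`. -/
def detBy (A : Finset (V → K)) (S : Finset V) : Prop :=
  ∀ f g : V → K, (∀ v ∈ S, f v = g v) → (f ∈ A ↔ g ∈ A)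

lemma detBy_mono {A : Finset (V → K)} {S S' : Finset V} (h : S ⊆ S') (hA : detBy A S) :
    detBy A S' := fun f g hfg => hA f g (fun v hv => hfg v (h hv))

/-- combine two functions along `S` -/
def llCombine (S : Finset V) (f g : V → K) : V → K := fun v => if v ∈ S then f v else g v

lemma llCombine_invol (S : Finset V) (f g : V → K) :
    llCombine S (llCombine S f g) (llCombine S g f) = f := by
  funext v; by_cases hv : v ∈ S <;> simp [llCombine, hv]

lemma llCombine_agree_left (S : Finset V) (f g : V → K) (v : V) (hv : v ∈ S) :
    llCombine S f g v = f v := if_pos hv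

lemma llCombine_agree_right (S : Finset V) (f g : V → K) (v : V) (hv : v ∉ S) :
    llCombine S f g v = g v := if_neg hv

lemma indep_card (A B : Finset (V → K)) (S : Finset V)
    (hA : detBy A S) (hB : detBy B Sᶜ) :
    (A ∩ B).card * Fintype.card (V → K) = A.card * B.card := by
  have hmemA : ∀ f g : V → K, llCombine S f g ∈ A ↔ f ∈ A := by
    intro f g
    exact hA _ _ (fun v hv => llCombine_agree_left S f g v hv)
  have hmemB : ∀ f g : V → K, llCombine S f g ∈ B ↔ g ∈ B := by
    intro f g
    exact hB _ _ (fun v hv => llCombine_agree_right S f g v (Finset.mem_compl.mp hv))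
  have key : ((A ∩ B) ×ˢ (Finset.univ : Finset (V → K))).card = (A ×ˢ B).card := by
    refine Finset.card_bij' (fun p _ => (llCombine S p.1 p.2, llCombine S p.2 p.1))
      (fun p _ => (llCombine S p.1 p.2, llCombine S p.2 p.1)) ?_ ?_ ?_ ?_
    · rintro ⟨f, g⟩ hp
      rw [Finset.mem_product] at hp ⊢
      obtain ⟨hf, -⟩ := hp
      rw [Finset.mem_inter] at hf
      exact ⟨(hmemA f g).mpr hf.1, (hmemB g f).mpr hf.2⟩
    · rintro ⟨f, g⟩ hp
      rw [Finset.mem_product] at hp ⊢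
      obtain ⟨hf, hg⟩ := hp
      exact ⟨Finset.mem_inter.mpr ⟨(hmemA f g).mpr hf, (hmemB f g).mpr hg⟩,
        Finset.mem_univ _⟩
    · rintro ⟨f, g⟩ hp
      simp only [Prod.mk.injEq]
      exact ⟨llCombine_invol S f g, llCombine_invol S g f⟩
    · rintro ⟨f, g⟩ hp
      simp only [Prod.mk.injEq]
      exact ⟨llCombine_invol S f g, llCombine_invol S g f⟩
  rw [Finset.card_product, Finset.card_product, Finset.card_univ] at key
  exact key

lemma detBy_llGood {I : Type*} [DecidableEq I] (bad : I → Finset (V → K)) (T : Finset I)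
    (S : Finset V) (h : ∀ j ∈ T, detBy (bad j) S) : detBy (llGood bad T) S := by
  intro f g hfg
  simp only [mem_llGood]
  constructor
  · intro hh j hj
    rw [← h j hj f g hfg]
    exact hh j hj
  · intro hh j hj
    rw [h j hj f g hfg]
    exact hh j hj

end Product
lemma card_missColor {V : Type*} [Fintype V] [DecidableEq V] {ℓ : ℕ} (e : Finset V) (c : Fin ℓ) :
    (Finset.univ.filter (fun f : V → Fin ℓ => ∀ v ∈ e, f v ≠ c)).card
      = (ℓ - 1) ^ e.card * ℓ ^ (Fintype.card V - e.card) := by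
  have h1 : Finset.univ.filter (fun f : V → Fin ℓ => ∀ v ∈ e, f v ≠ c)
      = Fintype.piFinset (fun v => if v ∈ e then ({c}ᶜ : Finset (Fin ℓ)) else Finset.univ) := by
    ext f
    simp only [Finset.mem_filter, Finset.mem_univ, true_and, Fintype.mem_piFinset]
    constructor
    · intro h v
      by_cases hv : v ∈ e
      · simp [hv, h v hv]
      · simp [hv]
    · intro h v hv
      have := h v
      simpa [hv] using this
  rw [h1, Fintype.card_piFinset]
  rw [← Finset.prod_sdiff (Finset.subset_univ e)]
  have h2 : ∀ v ∈ e,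
      (if v ∈ e then ({c}ᶜ : Finset (Fin ℓ)) else Finset.univ).card = ℓ - 1 := by
    intro v hv; simp [hv, Finset.card_compl]
  have h3 : ∀ v ∈ Finset.univ \ e,
      (if v ∈ e then ({c}ᶜ : Finset (Fin ℓ)) else Finset.univ).card = ℓ := by
    intro v hv; simp [(Finset.mem_sdiff.mp hv).2]
  rw [Finset.prod_congr rfl h2, Finset.prod_congr rfl h3, Finset.prod_const, Finset.prod_const]
  rw [Finset.card_sdiff_of_subset (Finset.subset_univ e), Finset.card_univ]
  ring

lemma inv_e_le (t : ℕ) (ht : 3 ≤ t) :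
    Real.exp (-1) ≤ (1 - 1/(t:ℝ)) ^ (t - 1) := by
  have htr : (3:ℝ) ≤ (t:ℝ) := by exact_mod_cast ht
  set s : ℕ := t - 1 with hs
  have hsr : (s:ℝ) = (t:ℝ) - 1 := by
    have h1t : 1 ≤ t := by omega
    rw [hs]
    rw [Nat.cast_sub h1t, Nat.cast_one]
  have hs2 : (2:ℝ) ≤ (s:ℝ) := by rw [hsr]; linarith
  have hspos : (0:ℝ) < (s:ℝ) := by linarith
  have h1 : 1 + 1/(s:ℝ) ≤ Real.exp (1/(s:ℝ)) := by
    have := Real.add_one_le_exp (1/(s:ℝ)); linarith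
  have h2 : (1 + 1/(s:ℝ))^s ≤ Real.exp (1/(s:ℝ)) ^ s :=
    pow_le_pow_left₀ (by positivity) h1 s
  rw [← Real.exp_nat_mul] at h2
  have h3 : (s:ℝ) * (1/(s:ℝ)) = 1 := by field_simp
  rw [h3] at h2
  have htpos : (0:ℝ) < (t:ℝ) := by linarith
  have h4 : 1 + 1/(s:ℝ) = (t:ℝ)/(s:ℝ) := by
    rw [hsr, one_add_div (by linarith : (t:ℝ) - 1 ≠ 0)]
    congr 1; ring
  have h5 : 1 - 1/(t:ℝ) = (s:ℝ)/(t:ℝ) := by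
    rw [hsr]
    exact one_sub_div (by linarith : (t:ℝ) ≠ 0)
  rw [h4] at h2
  have hpos : (0:ℝ) < ((t:ℝ)/(s:ℝ))^s := by positivity
  have h6 : (Real.exp 1)⁻¹ ≤ (((t:ℝ)/(s:ℝ))^s)⁻¹ := by
    apply inv_anti₀ hpos h2
  have h7 : (((t:ℝ)/(s:ℝ))^s)⁻¹ = ((s:ℝ)/(t:ℝ))^s := by
    rw [← inv_pow, inv_div]
  rw [h7] at h6
  rw [h5, Real.exp_neg]
  exact h6

lemma miss_prob_bound (ℓ Fmin Δ t : ℕ) (hℓ : 1 ≤ ℓ) (ht : t = Fmin * Δ) (ht1 : 1 ≤ t)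
    (hL : Real.log (Real.exp 1 * Fmin * Δ) ≤ (Fmin:ℝ)/ℓ) :
    (1 - 1/(ℓ:ℝ)) ^ Fmin ≤ Real.exp (-1) / t := by
  have hℓr : (1:ℝ) ≤ (ℓ:ℝ) := by exact_mod_cast hℓ
  have h1 : 1 - 1/(ℓ:ℝ) ≤ Real.exp (-(1/(ℓ:ℝ))) := by
    have := Real.add_one_le_exp (-(1/(ℓ:ℝ))); linarith
  have h0 : (0:ℝ) ≤ 1 - 1/(ℓ:ℝ) := by
    have : 1/(ℓ:ℝ) ≤ 1 := by rw [div_le_one (by linarith)]; linarith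
    linarith
  have h2 : (1 - 1/(ℓ:ℝ))^Fmin ≤ Real.exp (-(1/(ℓ:ℝ)))^Fmin := pow_le_pow_left₀ h0 h1 _
  rw [← Real.exp_nat_mul] at h2
  have h3 : (Fmin:ℝ) * (-(1/(ℓ:ℝ))) = -((Fmin:ℝ)/(ℓ:ℝ)) := by ring
  rw [h3] at h2
  have htpos : (0:ℝ) < (t:ℝ) := by exact_mod_cast ht1
  have hprod : Real.exp 1 * (Fmin:ℝ) * (Δ:ℝ) = Real.exp 1 * (t:ℝ) := by
    rw [ht]; push_cast; ring
  have h4 : Real.log (Real.exp 1 * Fmin * Δ) = 1 + Real.log t := by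
    rw [hprod, Real.log_mul (Real.exp_ne_zero 1) (by positivity), Real.log_exp]
  have h5 : Real.exp (-((Fmin:ℝ)/(ℓ:ℝ))) ≤ Real.exp (-(1 + Real.log t)) := by
    apply Real.exp_le_exp.mpr
    have := hL; rw [h4] at this; linarith
  have h6 : Real.exp (-(1 + Real.log t)) = Real.exp (-1) / t := by
    rw [neg_add, Real.exp_add, Real.exp_neg (Real.log t), Real.exp_log htpos]
    ring
  calc (1 - 1/(ℓ:ℝ))^Fmin ≤ Real.exp (-((Fmin:ℝ)/(ℓ:ℝ))) := h2
    _ ≤ Real.exp (-(1 + Real.log t)) := h5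
    _ = Real.exp (-1) / t := h6

lemma t_three (Fmin Δ t : ℕ) (ht : t = Fmin * Δ) (ht1 : 1 ≤ t)
    (hFt : Fmin ≤ t) (h2L : 2 * Real.log (Real.exp 1 * Fmin * Δ) ≤ (Fmin:ℝ)) :
    3 ≤ t := by
  have htpos : (0:ℝ) < (t:ℝ) := by exact_mod_cast ht1
  have hprod : Real.exp 1 * (Fmin:ℝ) * (Δ:ℝ) = Real.exp 1 * (t:ℝ) := by
    rw [ht]; push_cast; ring
  have h4 : Real.log (Real.exp 1 * Fmin * Δ) = 1 + Real.log t := by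
    rw [hprod, Real.log_mul (Real.exp_ne_zero 1) (by positivity), Real.log_exp]
  rw [h4] at h2L
  have hFtr : (Fmin:ℝ) ≤ (t:ℝ) := by exact_mod_cast hFt
  have hkey : 2 + 2 * Real.log t ≤ (t:ℝ) := by linarith
  by_contra hc
  push_neg at hc
  interval_cases t
  · rw [show ((1:ℕ):ℝ) = 1 by norm_num, Real.log_one] at hkey
    norm_num at hkey
  · have hl2 := Real.log_pos (by norm_num : (1:ℝ) < 2)
    rw [show ((2:ℕ):ℝ) = 2 by norm_num] at hkey
    linarith

/-- Lovász Local Lemma application: if every hyperedge has at least `F_min` vertices,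
each hyperedge intersects at most `Δ` others, `F_min·Δ ≥ 1`, and
`ℓ = ⌊F_min / ln(e·F_min·Δ)⌋ ≥ 1`, then a uniformly random `ℓ`-coloring makes every
color appear in every hyperedge with positive probability; hence a polychromatic
coloring with `ℓ` colors exists, and equivalently `ℓ` disjoint set covers
(transversal classes) exist. -/
theorem stmt6 {V : Type*} [Fintype V] [DecidableEq V]
    (E : Finset (Finset V)) (Fmin Δ ℓ : ℕ)
    (hF : ∀ e ∈ E, Fmin ≤ e.card)
    (hΔ : ∀ e ∈ E, (E.filter (fun e' => e' ≠ e ∧ (e ∩ e').Nonempty)).card ≤ Δ)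
    (hFΔ : 1 ≤ Fmin * Δ)
    (hℓdef : ℓ = ⌊(Fmin : ℝ) / Real.log (Real.exp 1 * Fmin * Δ)⌋₊)
    (hℓ1 : 1 ≤ ℓ) :
    0 < (Finset.univ.filter
        (fun f : V → Fin ℓ => ∀ e ∈ E, ∀ c : Fin ℓ, ∃ v ∈ e, f v = c)).card ∧
    (∃ f : V → Fin ℓ, ∀ e ∈ E, ∀ c : Fin ℓ, ∃ v ∈ e, f v = c) ∧
    (∃ C : Fin ℓ → Finset V, (∀ a b, a ≠ b → Disjoint (C a) (C b)) ∧
      ∀ a, ∀ e ∈ E, ∃ v ∈ C a, v ∈ e) := by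
  have hFmin1 : 1 ≤ Fmin := by
    rcases Nat.eq_zero_or_pos Fmin with h | h
    · rw [h] at hFΔ; simp at hFΔ
    · exact h
  have hΔ1 : 1 ≤ Δ := by
    rcases Nat.eq_zero_or_pos Δ with h | h
    · rw [h] at hFΔ; simp at hFΔ
    · exact h
  have hNE : Nonempty (V → Fin ℓ) := ⟨fun _ => ⟨0, by omega⟩⟩
  have key : 0 < (Finset.univ.filter
      (fun f : V → Fin ℓ => ∀ e ∈ E, ∀ c : Fin ℓ, ∃ v ∈ e, f v = c)).card := by
    rcases eq_or_lt_of_le hℓ1 with hℓeq | hℓ2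
    · -- trivial case ℓ = 1
      have hall : Finset.univ.filter
          (fun f : V → Fin ℓ => ∀ e ∈ E, ∀ c : Fin ℓ, ∃ v ∈ e, f v = c)
          = Finset.univ := by
        apply Finset.filter_true_of_mem
        intro f _ e he c
        obtain ⟨v, hv⟩ := Finset.card_pos.mp (lt_of_lt_of_le hFmin1 (hF e he))
        refine ⟨v, hv, ?_⟩
        have : Subsingleton (Fin ℓ) := by
          rw [← hℓeq]; exact Fin.subsingleton_one
        exact Subsingleton.elim _ _
      rw [hall, Finset.card_univ]
      exact Fintype.card_pos
    · -- main case ℓ ≥ 2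
      set t : ℕ := Fmin * Δ with htdef
      have ht1 : 1 ≤ t := hFΔ
      have htpos : (0:ℝ) < (t:ℝ) := by exact_mod_cast ht1
      set L : ℝ := Real.log (Real.exp 1 * Fmin * Δ) with hLdef
      have hprod : Real.exp 1 * (Fmin:ℝ) * (Δ:ℝ) = Real.exp 1 * (t:ℝ) := by
        rw [htdef]; push_cast; ring
      have hLlog : L = 1 + Real.log t := by
        rw [hLdef, hprod, Real.log_mul (Real.exp_ne_zero 1) (by positivity), Real.log_exp]
      have hLpos : (0:ℝ) < L := by
        rw [hLlog]
        have : (0:ℝ) ≤ Real.log t := Real.log_nonneg (by exact_mod_cast ht1)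
        linarith
      have hℓpos : (0:ℝ) < (ℓ:ℝ) := by
        have : (0:ℕ) < ℓ := by omega
        exact_mod_cast this
      have hℓ2r : (2:ℝ) ≤ (ℓ:ℝ) := by exact_mod_cast hℓ2
      have hfl : (ℓ:ℝ) ≤ (Fmin:ℝ) / L := by
        rw [hℓdef]
        exact Nat.floor_le (by positivity)
      have hℓL : (ℓ:ℝ) * L ≤ (Fmin:ℝ) := (le_div_iff₀ hLpos).mp hfl
      have hL_le : L ≤ (Fmin:ℝ) / (ℓ:ℝ) := by
        rw [le_div_iff₀ hℓpos]
        calc L * (ℓ:ℝ) = (ℓ:ℝ) * L := by ring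
          _ ≤ (Fmin:ℝ) := hℓL
      have h2L : 2 * L ≤ (Fmin:ℝ) := by nlinarith
      have ht3 : 3 ≤ t := t_three Fmin Δ t htdef ht1 (Nat.le_mul_of_pos_right Fmin hΔ1) h2L
      have ht3r : (3:ℝ) ≤ (t:ℝ) := by exact_mod_cast ht3
      have hlog3 : (1:ℝ) ≤ Real.log t := by
        rw [Real.le_log_iff_exp_le htpos]
        have := Real.exp_one_lt_d9
        linarith
      -- set up the LLL data
      set I : Type _ := {e // e ∈ E} × Fin ℓ with hIdef
      let bad : I → Finset (V → Fin ℓ) :=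
        fun p => Finset.univ.filter (fun f => ∀ v ∈ (p.1.1 : Finset V), f v ≠ p.2)
      let N : I → Finset I :=
        fun p => Finset.univ.filter (fun q => ((p.1.1 : Finset V) ∩ q.1.1).Nonempty)
      set x : ℝ := 1 / (t:ℝ) with hxdef
      set d : ℕ := t - 1 with hddef
      have hdt : d + 1 = t := by omega
      have hx0 : (0:ℝ) ≤ x := by positivity
      have hx1 : x < 1 := by
        rw [hxdef, div_lt_one htpos]; linarith
      have hdcast : ((d:ℕ):ℝ) = (t:ℝ) - 1 := by
        rw [hddef, Nat.cast_sub (by omega : 1 ≤ t), Nat.cast_one]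
      have hdet : ∀ p : I, detBy (bad p) p.1.1 := by
        intro p f g hfg
        simp only [bad, Finset.mem_filter, Finset.mem_univ, true_and]
        constructor
        · intro h v hv
          rw [← hfg v hv]; exact h v hv
        · intro h v hv
          rw [hfg v hv]; exact h v hv
      have hNself : ∀ p : I, p ∈ N p := by
        intro p
        simp only [N, Finset.mem_filter, Finset.mem_univ, true_and, Finset.inter_self]
        exact Finset.card_pos.mp (lt_of_lt_of_le hFmin1 (hF _ p.1.2))
      have hNd : ∀ p : I, (N p).card ≤ d + 1 := by
        intro p
        rw [hdt]
        -- N p as a product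
        have hNprod : N p = (Finset.univ.filter
            (fun s : {e // e ∈ E} => ((p.1.1 : Finset V) ∩ s.1).Nonempty)) ×ˢ Finset.univ := by
          ext q
          simp only [N, Finset.mem_filter, Finset.mem_univ, true_and]
          constructor
          · intro h
            exact Finset.mem_product.mpr
              ⟨Finset.mem_filter.mpr ⟨Finset.mem_univ _, h⟩, Finset.mem_univ _⟩
          · intro h
            exact (Finset.mem_filter.mp (Finset.mem_product.mp h).1).2
        have hsubcard : (Finset.univ.filter
            (fun s : {e // e ∈ E} => ((p.1.1 : Finset V) ∩ s.1).Nonempty)).card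
            = (E.filter (fun e' => ((p.1.1 : Finset V) ∩ e').Nonempty)).card := by
          apply Finset.card_bij (fun s _ => s.1)
          · rintro ⟨e', he'⟩ hs
            simp only [Finset.mem_filter, Finset.mem_univ, true_and] at hs
            exact Finset.mem_filter.mpr ⟨he', hs⟩
          · rintro ⟨e1, he1⟩ h1 ⟨e2, he2⟩ h2 h
            exact Subtype.ext h
          · intro e' he'
            rw [Finset.mem_filter] at he'
            exact ⟨⟨e', he'.1⟩, by simp [he'.2], rfl⟩
        have hedges : (E.filter (fun e' => ((p.1.1 : Finset V) ∩ e').Nonempty)).card ≤ Δ + 1 := by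
          have hsub : E.filter (fun e' => ((p.1.1 : Finset V) ∩ e').Nonempty)
              ⊆ insert (p.1.1 : Finset V)
                (E.filter (fun e' => e' ≠ (p.1.1 : Finset V) ∧ ((p.1.1 : Finset V) ∩ e').Nonempty)) := by
            intro e' he'
            rw [Finset.mem_filter] at he'
            by_cases h : e' = (p.1.1 : Finset V)
            · exact Finset.mem_insert.mpr (Or.inl h)
            · exact Finset.mem_insert.mpr (Or.inr (Finset.mem_filter.mpr ⟨he'.1, h, he'.2⟩))
          calc (E.filter (fun e' => ((p.1.1 : Finset V) ∩ e').Nonempty)).card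
              ≤ _ := Finset.card_le_card hsub
            _ ≤ (E.filter (fun e' => e' ≠ (p.1.1 : Finset V)
                  ∧ ((p.1.1 : Finset V) ∩ e').Nonempty)).card + 1 := Finset.card_insert_le _ _
            _ ≤ Δ + 1 := by
                have := hΔ p.1.1 p.1.2
                omega
        have hcardN : (N p).card ≤ (Δ + 1) * ℓ := by
          rw [hNprod, Finset.card_product, hsubcard, Finset.card_univ, Fintype.card_fin]
          exact Nat.mul_le_mul_right ℓ hedges
        -- (Δ+1) * ℓ ≤ t
        have hDL : (Δ:ℝ) + 1 ≤ (Δ:ℝ) * L := by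
          have hΔr : (1:ℝ) ≤ (Δ:ℝ) := by exact_mod_cast hΔ1
          rw [hLlog]
          nlinarith
        have hnb : ((Δ:ℝ) + 1) * (ℓ:ℝ) ≤ (t:ℝ) := by
          have hΔ0 : (0:ℝ) ≤ (Δ:ℝ) := by positivity
          have htr : (t:ℝ) = (Fmin:ℝ) * (Δ:ℝ) := by rw [htdef]; push_cast; ring
          nlinarith [mul_le_mul_of_nonneg_left hDL (le_of_lt hℓpos),
            mul_le_mul_of_nonneg_left hℓL hΔ0]
        have : ((Δ + 1) * ℓ : ℕ) ≤ t := by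
          have : (((Δ + 1) * ℓ : ℕ) : ℝ) ≤ (t:ℝ) := by push_cast; linarith [hnb]
          exact_mod_cast this
        omega
      have hcardΩ : Fintype.card (V → Fin ℓ) = ℓ ^ Fintype.card V := by
        rw [Fintype.card_fun, Fintype.card_fin]
      have hp : ∀ p : I, ((bad p).card : ℝ)
          ≤ x * (1 - x) ^ d * Fintype.card (V → Fin ℓ) := by
        intro p
        obtain ⟨⟨e, he⟩, c⟩ := p
        have hk : (bad (⟨⟨e, he⟩, c⟩ : I)).card
            = (ℓ - 1) ^ e.card * ℓ ^ (Fintype.card V - e.card) := card_missColor e c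
        rw [hk, hcardΩ]
        set k : ℕ := e.card with hkdef
        have hkF : Fmin ≤ k := hF e he
        have hkn : k ≤ Fintype.card V := by
          rw [hkdef]; exact Finset.card_le_univ e
        have hcast : (((ℓ - 1) ^ k * ℓ ^ (Fintype.card V - k) : ℕ) : ℝ)
            = ((ℓ:ℝ) - 1) ^ k * (ℓ:ℝ) ^ (Fintype.card V - k) := by
          push_cast [Nat.cast_sub (show 1 ≤ ℓ by omega)]
          ring
        have hcast2 : ((ℓ ^ Fintype.card V : ℕ) : ℝ) = (ℓ:ℝ) ^ Fintype.card V := by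
          push_cast; ring
        rw [hcast, hcast2]
        have hsplit : ((ℓ:ℝ)) ^ Fintype.card V = (ℓ:ℝ) ^ k * (ℓ:ℝ) ^ (Fintype.card V - k) := by
          rw [← pow_add]
          congr 1
          omega
        rw [hsplit]
        have hpow2 : (0:ℝ) ≤ (ℓ:ℝ) ^ (Fintype.card V - k) := by positivity
        have hmain : ((ℓ:ℝ) - 1) ^ k ≤ x * (1 - x) ^ d * (ℓ:ℝ) ^ k := by
          have hfactor : ((ℓ:ℝ) - 1) ^ k = (1 - 1/(ℓ:ℝ)) ^ k * (ℓ:ℝ) ^ k := by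
            rw [← mul_pow]
            congr 1
            field_simp
          rw [hfactor]
          have hratio0 : (0:ℝ) ≤ 1 - 1/(ℓ:ℝ) := by
            have : 1/(ℓ:ℝ) ≤ 1 := by rw [div_le_one hℓpos]; linarith
            linarith
          have hratio1 : 1 - 1/(ℓ:ℝ) ≤ 1 := by
            have : (0:ℝ) ≤ 1/(ℓ:ℝ) := by positivity
            linarith
          have hstep1 : (1 - 1/(ℓ:ℝ)) ^ k ≤ (1 - 1/(ℓ:ℝ)) ^ Fmin :=
            pow_le_pow_of_le_one hratio0 hratio1 hkF
          have hstep2 : (1 - 1/(ℓ:ℝ)) ^ Fmin ≤ Real.exp (-1) / t :=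
            miss_prob_bound ℓ Fmin Δ t (by omega) htdef ht1 (by rw [← hLdef]; exact hL_le)
          have hstep3 : Real.exp (-1) / t ≤ x * (1 - x) ^ d := by
            have hie := inv_e_le t ht3
            rw [hxdef]
            calc Real.exp (-1) / t ≤ (1 - 1/(t:ℝ)) ^ (t - 1) / t := by
                  rw [div_le_div_iff₀ htpos htpos]
                  exact mul_le_mul_of_nonneg_right hie (le_of_lt htpos)
              _ = 1/(t:ℝ) * (1 - 1/(t:ℝ)) ^ d := by rw [hddef]; ring
          have hchain : (1 - 1/(ℓ:ℝ)) ^ k ≤ x * (1 - x) ^ d :=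
            le_trans hstep1 (le_trans hstep2 hstep3)
          have hℓk : (0:ℝ) ≤ (ℓ:ℝ) ^ k := by positivity
          calc (1 - 1/(ℓ:ℝ)) ^ k * (ℓ:ℝ) ^ k
              ≤ (x * (1 - x) ^ d) * (ℓ:ℝ) ^ k := mul_le_mul_of_nonneg_right hchain hℓk
            _ = x * (1 - x) ^ d * (ℓ:ℝ) ^ k := by ring
        calc ((ℓ:ℝ) - 1) ^ k * (ℓ:ℝ) ^ (Fintype.card V - k)
            ≤ (x * (1 - x) ^ d * (ℓ:ℝ) ^ k) * (ℓ:ℝ) ^ (Fintype.card V - k) :=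
              mul_le_mul_of_nonneg_right hmain hpow2
          _ = x * (1 - x) ^ d * ((ℓ:ℝ) ^ k * (ℓ:ℝ) ^ (Fintype.card V - k)) := by ring
      have hind : ∀ (i : I) (T : Finset I), (∀ j ∈ T, j ∉ N i) →
          (((bad i) ∩ llGood bad T).card : ℝ) * Fintype.card (V → Fin ℓ)
            = (bad i).card * (llGood bad T).card := by
        intro i T hT
        have hdetB : detBy (llGood bad T) (i.1.1 : Finset V)ᶜ := by
          apply detBy_llGood
          intro j hj
          have hdisj : ∀ v ∈ (j.1.1 : Finset V), v ∉ (i.1.1 : Finset V) := by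
            intro v hv hvi
            apply hT j hj
            simp only [N, Finset.mem_filter, Finset.mem_univ, true_and]
            exact ⟨v, Finset.mem_inter.mpr ⟨hvi, hv⟩⟩
          exact detBy_mono
            (fun v hv => Finset.mem_compl.mpr (hdisj v hv)) (hdet j)
        have := indep_card (bad i) (llGood bad T) i.1.1 (hdet i) hdetB
        exact_mod_cast congrArg (Nat.cast : ℕ → ℝ) this
      have hlow := LLL_lower bad N hx0 hx1 hNself hNd hp hind Finset.univ
      have hgoodpos : 0 < (llGood bad Finset.univ).card := by
        have hΩpos : (0:ℝ) < Fintype.card (V → Fin ℓ) := by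
          have := Fintype.card_pos (α := V → Fin ℓ)
          exact_mod_cast this
        have h1 : (0:ℝ) < (1 - x) ^ (Finset.univ : Finset I).card
            * (Fintype.card (V → Fin ℓ) : ℝ) := by
          apply mul_pos
          · apply pow_pos; linarith
          · exact hΩpos
        have h2 := lt_of_lt_of_le h1 hlow
        exact_mod_cast h2
      have heq : llGood bad (Finset.univ : Finset I)
          = Finset.univ.filter
            (fun f : V → Fin ℓ => ∀ e ∈ E, ∀ c : Fin ℓ, ∃ v ∈ e, f v = c) := by
        ext f
        rw [mem_llGood, Finset.mem_filter]
        constructor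
        · intro h
          refine ⟨Finset.mem_univ _, fun e he c => ?_⟩
          have h1 := h (⟨⟨e, he⟩, c⟩ : I) (Finset.mem_univ _)
          simp only [bad, Finset.mem_filter, Finset.mem_univ, true_and] at h1
          push_neg at h1
          exact h1
        · rintro ⟨-, h⟩ p -
          simp only [bad, Finset.mem_filter, Finset.mem_univ, true_and]
          push_neg
          exact h p.1.1 p.1.2 p.2
      rw [heq] at hgoodpos
      exact hgoodpos
  refine ⟨key, ?_, ?_⟩
  · obtain ⟨f, hf⟩ := Finset.card_pos.mp key
    exact ⟨f, (Finset.mem_filter.mp hf).2⟩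
  · obtain ⟨f, hf⟩ := Finset.card_pos.mp key
    have hf' := (Finset.mem_filter.mp hf).2
    refine ⟨fun a => Finset.univ.filter (fun v => f v = a), ?_, ?_⟩
    · intro a b hab
      rw [Finset.disjoint_left]
      intro v hva hvb
      rw [Finset.mem_filter] at hva hvb
      exact hab (hva.2 ▸ hvb.2)
    · intro a e he
      obtain ⟨v, hv, hfv⟩ := hf' e he a
      exact ⟨v, Finset.mem_filter.mpr ⟨Finset.mem_univ _, hfv⟩, hv⟩
end

section
/- In the 1-D construction, every directed path in the network N from source s to sink t corresponds to a set cover of U: if the path visits sensors S_{i_1}, …, S_{i_k} in order, then their union covers all elements from L(S_{i_1}) to R(S_{i_k}), where L(S_{i_1}) = 1 and R(S_{i_k}) = n. -/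
private lemma aux14 {ι : Type*} (L R : ι → ℕ) (hLR : ∀ j, L j ≤ R j) :
    ∀ (p : List ι) (hp : p ≠ []),
    p.Chain' (fun a b => L a ≤ L b ∧
      ∀ x, L a ≤ x → x ≤ R b → x ∈ Finset.Icc (L a) (R a) ∪ Finset.Icc (L b) (R b)) →
    ∀ x, L (p.head hp) ≤ x → x ≤ R (p.getLast hp) →
    ∃ j ∈ p, x ∈ Finset.Icc (L j) (R j)
  | [], hp, _, _, _, _ => absurd rfl hp
  | [a], _, _, x, h1, h2 => ⟨a, by simp, by simp only [List.head_cons, List.getLast_singleton] at h1 h2; simp [Finset.mem_Icc, h1, h2]⟩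
  | (a :: b :: rest), _, hch, x, h1, h2 => by
      rw [List.Chain', List.isChain_cons_cons] at hch
      obtain ⟨⟨hLab, hcov⟩, hch'⟩ := hch
      simp only [List.head_cons] at h1
      by_cases hxa : x ≤ R a
      · exact ⟨a, by simp, Finset.mem_Icc.mpr ⟨h1, hxa⟩⟩
      · have hlast : (a :: b :: rest).getLast (by simp) = (b :: rest).getLast (by simp) :=
          List.getLast_cons (by simp)
        rw [hlast] at h2
        have hLbx : L b ≤ x := by
          by_cases hxb : x ≤ R b
          · have := hcov x h1 hxb
            simp only [Finset.mem_union, Finset.mem_Icc] at this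
            omega
          · have := hLR b
            omega
        obtain ⟨j, hj, hjx⟩ := aux14 L R hLR (b :: rest) (by simp) hch' x (by simpa using hLbx) h2
        exact ⟨j, List.mem_cons_of_mem a hj, hjx⟩

/-- 1-D construction: sensors are intervals `[L j, R j] ⊆ {1,…,n}`.  If consecutive
sensors along a path are directed neighbors (`L a ≤ L b` and together they cover all
elements from `L a` to `R b`), the first sensor contains target `1` (edge from the
source `s`) and the last contains target `n` (edge to the sink `t`), then the sensors
on the path form a set cover of `{1,…,n}`. -/
theorem stmt14 {ι : Type*} (n : ℕ) (L R : ι → ℕ)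
    (hLR : ∀ j, 1 ≤ L j ∧ L j ≤ R j ∧ R j ≤ n)
    (p : List ι) (hp : p ≠ [])
    (hchain : p.Chain' (fun a b => L a ≤ L b ∧
      ∀ x, L a ≤ x → x ≤ R b → x ∈ Finset.Icc (L a) (R a) ∪ Finset.Icc (L b) (R b)))
    (hfirst : (1 : ℕ) ∈ Finset.Icc (L (p.head hp)) (R (p.head hp)))
    (hlast : n ∈ Finset.Icc (L (p.getLast hp)) (R (p.getLast hp))) :
    ∀ x ∈ Finset.Icc 1 n, ∃ j ∈ p, x ∈ Finset.Icc (L j) (R j) := by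
  intro x hx
  rw [Finset.mem_Icc] at hx hfirst hlast
  exact aux14 L R (fun j => (hLR j).2.1) p hp hchain x (le_trans hfirst.1 hx.1) (le_trans hx.2 hlast.2)
end

section
/- For interval sensors on a line (1-D case), the maximum achievable lifetime of the fractional MLCP equals the maximum number of pairwise disjoint set covers (DSCP); i.e., the MLCP LP has an integral optimal solution. -/
set_option linter.unusedSectionVars false

section mlcpAux
variable {ι : Type*} [Fintype ι] [DecidableEq ι]

/-- Greedy extraction with invariants: from a family `A` in which every point of `[1,n]`
is covered at least `K+1` times, we build (by a leftward-maximal greedy sweep) a subfamily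
`D` covering `(p, n]`, all of whose members reach beyond `p`, together with a counting
invariant guaranteeing that removing `D` keeps every point covered at least `K` times. -/
lemma mlcp_greedy_lemma (n : ℕ) (L R : ι → ℕ) (K : ℕ) (A : Finset ι)
    (hA : ∀ m ∈ Finset.Icc 1 n, K + 1 ≤ (A.filter (fun j => L j ≤ m ∧ m ≤ R j)).card) :
    ∀ fuel p : ℕ, n ≤ p + fuel →
    ∃ D : Finset ι, D ⊆ A ∧
      (∀ m ∈ Finset.Icc 1 n, p < m → ∃ j ∈ D, L j ≤ m ∧ m ≤ R j) ∧
      (∀ j ∈ D, p < R j) ∧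
      (∀ m ∈ Finset.Icc 1 n, ∀ S : Finset ι, S ⊆ A → Disjoint S D →
        (∀ j ∈ S, L j ≤ m ∧ m ≤ R j ∧ R j ≤ p) →
        (D.filter (fun j => L j ≤ m ∧ m ≤ R j)).Nonempty →
        (D.filter (fun j => L j ≤ m ∧ m ≤ R j)).card + S.card + K
          ≤ (A.filter (fun j => L j ≤ m ∧ m ≤ R j)).card) := by
  intro fuel
  induction fuel with
  | zero =>
    intro p hp
    refine ⟨∅, by simp, ?_, by simp, ?_⟩
    · intro m hm hpm
      simp only [Finset.mem_Icc] at hm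
      omega
    · intro m hm S hS hdisj hScov hne
      simp at hne
  | succ fuel IH =>
    intro p hp
    by_cases hpn : n ≤ p
    · refine ⟨∅, by simp, ?_, by simp, ?_⟩
      · intro m hm hpm
        simp only [Finset.mem_Icc] at hm
        omega
      · intro m hm S hS hdisj hScov hne
        simp at hne
    · push_neg at hpn
      have hm1 : p + 1 ∈ Finset.Icc 1 n := by simp; omega
      have hne : (A.filter (fun j => L j ≤ p + 1 ∧ p + 1 ≤ R j)).Nonempty := by
        rw [← Finset.card_pos]
        have := hA _ hm1
        omega
      obtain ⟨j0, hj0mem, hj0max⟩ := Finset.exists_max_image _ L hne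
      simp only [Finset.mem_filter] at hj0mem
      obtain ⟨hj0A, hj0L, hj0R⟩ := hj0mem
      obtain ⟨D', hD'sub, hD'cov, hD'R, hD'key⟩ := IH (R j0) (by omega)
      have hj0D' : j0 ∉ D' := fun h => lt_irrefl _ (hD'R j0 h)
      refine ⟨insert j0 D', ?_, ?_, ?_, ?_⟩
      · exact Finset.insert_subset hj0A hD'sub
      · intro m hm hpm
        by_cases hmR : m ≤ R j0
        · exact ⟨j0, Finset.mem_insert_self _ _, by omega, hmR⟩
        · obtain ⟨j, hj, hjc⟩ := hD'cov m hm (by omega)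
          exact ⟨j, Finset.mem_insert_of_mem hj, hjc⟩
      · intro j hj
        rcases Finset.mem_insert.1 hj with rfl | hj
        · omega
        · have := hD'R j hj; omega
      · intro m hm S hS hdisj hScov hneF
        by_cases hj0m : L j0 ≤ m ∧ m ≤ R j0
        · have hfe : (insert j0 D').filter (fun j => L j ≤ m ∧ m ≤ R j)
              = insert j0 (D'.filter (fun j => L j ≤ m ∧ m ≤ R j)) := by
            rw [Finset.filter_insert, if_pos hj0m]
          have hj0nf : j0 ∉ D'.filter (fun j => L j ≤ m ∧ m ≤ R j) := by
            simp [hj0D']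
          have hcardins : ((insert j0 D').filter (fun j => L j ≤ m ∧ m ≤ R j)).card
              = (D'.filter (fun j => L j ≤ m ∧ m ≤ R j)).card + 1 := by
            rw [hfe, Finset.card_insert_of_notMem hj0nf]
          have hj0S : j0 ∉ S := fun h =>
            Finset.disjoint_left.1 hdisj h (Finset.mem_insert_self _ _)
          by_cases hd' : (D'.filter (fun j => L j ≤ m ∧ m ≤ R j)).Nonempty
          · have key := hD'key m hm (insert j0 S)
              (Finset.insert_subset hj0A hS)
              (by
                rw [Finset.disjoint_left]
                intro a ha ha'
                rcases Finset.mem_insert.1 ha with rfl | ha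
                · exact hj0D' ha'
                · exact Finset.disjoint_left.1 hdisj ha (Finset.mem_insert_of_mem ha'))
              (by
                intro j hj
                rcases Finset.mem_insert.1 hj with rfl | hj
                · exact ⟨hj0m.1, hj0m.2, le_rfl⟩
                · obtain ⟨h1, h2, h3⟩ := hScov j hj
                  exact ⟨h1, h2, by omega⟩)
              hd'
            rw [Finset.card_insert_of_notMem hj0S] at key
            omega
          · rw [Finset.not_nonempty_iff_eq_empty] at hd'
            have hdcard : ((insert j0 D').filter (fun j => L j ≤ m ∧ m ≤ R j)).card = 1 := by
              rw [hcardins, hd']; simp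
            rw [hdcard]
            by_cases hmp : m ≤ p + 1
            · have hsub : (A.filter (fun j => L j ≤ p + 1 ∧ p + 1 ≤ R j)) ∪ S
                  ⊆ A.filter (fun j => L j ≤ m ∧ m ≤ R j) := by
                intro i hi
                rcases Finset.mem_union.1 hi with hi | hi
                · simp only [Finset.mem_filter] at hi ⊢
                  have hLi := hj0max i (by simp only [Finset.mem_filter]; exact ⟨hi.1, hi.2⟩)
                  exact ⟨hi.1, by omega, by omega⟩
                · simp only [Finset.mem_filter]
                  obtain ⟨h1, h2, _⟩ := hScov i hi
                  exact ⟨hS hi, h1, h2⟩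
              have hdj : Disjoint (A.filter (fun j => L j ≤ p + 1 ∧ p + 1 ≤ R j)) S := by
                rw [Finset.disjoint_right]
                intro a ha ha'
                simp only [Finset.mem_filter] at ha'
                have := (hScov a ha).2.2
                omega
              have := Finset.card_le_card hsub
              rw [Finset.card_union_of_disjoint hdj] at this
              have := hA _ hm1
              omega
            · have hSe : S = ∅ := by
                rw [Finset.eq_empty_iff_forall_notMem]
                intro a ha
                have := hScov a ha
                omega
              rw [hSe]
              have := hA m hm
              simp
              omega
        · have hfe : (insert j0 D').filter (fun j => L j ≤ m ∧ m ≤ R j)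
              = D'.filter (fun j => L j ≤ m ∧ m ≤ R j) := by
            rw [Finset.filter_insert, if_neg hj0m]
          rw [hfe] at hneF ⊢
          exact hD'key m hm S hS
            (hdisj.mono_right (Finset.subset_insert _ _))
            (fun j hj => by
              obtain ⟨h1, h2, h3⟩ := hScov j hj
              exact ⟨h1, h2, by omega⟩)
            hneF

/-- From a family covering every point at least `K+1` times, one can extract a set cover
whose removal leaves every point covered at least `K` times. -/
lemma mlcp_extract_cover (n : ℕ) (L R : ι → ℕ) (K : ℕ) (A : Finset ι)
    (hA : ∀ m ∈ Finset.Icc 1 n, K + 1 ≤ (A.filter (fun j => L j ≤ m ∧ m ≤ R j)).card) :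
    ∃ D : Finset ι, D ⊆ A ∧
      (∀ m ∈ Finset.Icc 1 n, ∃ j ∈ D, L j ≤ m ∧ m ≤ R j) ∧
      (∀ m ∈ Finset.Icc 1 n, K ≤ ((A \ D).filter (fun j => L j ≤ m ∧ m ≤ R j)).card) := by
  obtain ⟨D, hsub, hcov, _, hkey⟩ := mlcp_greedy_lemma n L R K A hA n 0 (by omega)
  refine ⟨D, hsub, ?_, ?_⟩
  · intro m hm
    exact hcov m hm (by simp at hm; omega)
  · intro m hm
    have hfe : (A \ D).filter (fun j => L j ≤ m ∧ m ≤ R j)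
        = A.filter (fun j => L j ≤ m ∧ m ≤ R j) \ D.filter (fun j => L j ≤ m ∧ m ≤ R j) := by
      ext x; simp only [Finset.mem_filter, Finset.mem_sdiff]; tauto
    have hsubf : D.filter (fun j => L j ≤ m ∧ m ≤ R j)
        ⊆ A.filter (fun j => L j ≤ m ∧ m ≤ R j) :=
      Finset.filter_subset_filter _ hsub
    rw [hfe, Finset.card_sdiff_of_subset hsubf]
    by_cases hd : (D.filter (fun j => L j ≤ m ∧ m ≤ R j)).Nonempty
    · have := hkey m hm ∅ (by simp) (by simp) (by simp) hd
      simp at this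
      omega
    · rw [Finset.not_nonempty_iff_eq_empty] at hd
      rw [hd]
      have := hA m hm
      simp
      omega

/-- If every point of `[1,n]` is covered at least `K` times by the family `A` of intervals,
then there exist `K` pairwise disjoint set covers inside `A`. -/
lemma mlcp_many_covers (n : ℕ) (L R : ι → ℕ) :
    ∀ (K : ℕ) (A : Finset ι),
    (∀ m ∈ Finset.Icc 1 n, K ≤ (A.filter (fun j => L j ≤ m ∧ m ≤ R j)).card) →
    ∃ C : Fin K → Finset ι, (∀ a, C a ⊆ A) ∧
      (∀ a b, a ≠ b → Disjoint (C a) (C b)) ∧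
      (∀ a, ∀ m ∈ Finset.Icc 1 n, ∃ i ∈ C a, L i ≤ m ∧ m ≤ R i) := by
  intro K
  induction K with
  | zero =>
    intro A hA
    exact ⟨fun a => a.elim0, fun a => a.elim0, fun a => a.elim0, fun a => a.elim0⟩
  | succ K IH =>
    intro A hA
    obtain ⟨D, hDA, hDcov, hres⟩ := mlcp_extract_cover n L R K A hA
    obtain ⟨C', hC'sub, hC'disj, hC'cov⟩ := IH (A \ D) hres
    refine ⟨Fin.cases D C', ?_, ?_, ?_⟩
    · intro a
      refine Fin.cases ?_ ?_ a
      · exact hDA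
      · intro b
        exact (hC'sub b).trans (Finset.sdiff_subset)
    · have hDdC' : ∀ b, Disjoint D (C' b) := by
        intro b
        exact (Finset.disjoint_sdiff.mono_right (hC'sub b))
      intro a b hab
      rcases Fin.eq_zero_or_eq_succ a with rfl | ⟨a', rfl⟩ <;>
        rcases Fin.eq_zero_or_eq_succ b with rfl | ⟨b', rfl⟩
      · exact absurd rfl hab
      · simpa using hDdC' b'
      · simpa using (hDdC' a').symm
      · simpa using hC'disj a' b' (by simpa using hab)
    · intro a
      refine Fin.cases ?_ ?_ a
      · exact hDcov
      · intro b
        exact hC'cov b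

/-- Any feasible fractional MLCP solution has total value at most the coverage of any
fixed point `m0`. -/
lemma mlcp_frac_le (n : ℕ) (L R : ι → ℕ) (K : ℕ)
    (m0 : ℕ) (hm0 : ((Finset.univ : Finset ι).filter (fun j => L j ≤ m0 ∧ m0 ≤ R j)).card = K)
    (t : Finset ι → ℝ) (ht0 : ∀ C, 0 ≤ t C)
    (htcov : ∀ C, t C ≠ 0 → ∃ i ∈ C, L i ≤ m0 ∧ m0 ≤ R i)
    (htcap : ∀ i : ι, ∑ C ∈ Finset.univ.filter (fun C : Finset ι => i ∈ C), t C ≤ 1) :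
    ∑ C : Finset ι, t C ≤ (K : ℝ) := by
  set P : ι → Prop := fun i => L i ≤ m0 ∧ m0 ≤ R i with hP
  have hcard : ∀ C : Finset ι, ((C.filter P).card : ℝ) * t C
      = ∑ i ∈ Finset.univ.filter P, (if i ∈ C then t C else 0) := by
    intro C
    rw [← Finset.sum_filter]
    rw [Finset.sum_const]
    have : (Finset.univ.filter P).filter (fun i => i ∈ C) = C.filter P := by
      ext i; simp [and_comm]
    rw [this, nsmul_eq_mul]
  calc ∑ C : Finset ι, t C
      ≤ ∑ C : Finset ι, ((C.filter P).card : ℝ) * t C := by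
        apply Finset.sum_le_sum
        intro C _
        by_cases h : t C = 0
        · simp [h]
        · have hpos : 1 ≤ ((C.filter P).card : ℝ) := by
            have hne : (C.filter P).Nonempty := by
              obtain ⟨i, hi, hic⟩ := htcov C h
              exact ⟨i, Finset.mem_filter.2 ⟨hi, hic⟩⟩
            have := Finset.card_pos.2 hne
            exact_mod_cast this
          nlinarith [ht0 C]
    _ = ∑ C : Finset ι, ∑ i ∈ Finset.univ.filter P, (if i ∈ C then t C else 0) :=
        Finset.sum_congr rfl fun C _ => hcard C
    _ = ∑ i ∈ Finset.univ.filter P, ∑ C : Finset ι, (if i ∈ C then t C else 0) :=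
        Finset.sum_comm
    _ = ∑ i ∈ Finset.univ.filter P, ∑ C ∈ Finset.univ.filter (fun C : Finset ι => i ∈ C), t C :=
        Finset.sum_congr rfl fun i _ => (Finset.sum_filter _ _).symm
    _ ≤ ∑ i ∈ Finset.univ.filter P, (1 : ℝ) := Finset.sum_le_sum fun i _ => htcap i
    _ = ((Finset.univ.filter P).card : ℝ) := by rw [Finset.sum_const, nsmul_eq_mul, mul_one]
    _ = (K : ℝ) := by rw [hm0]

/-- Pairwise disjoint set covers give a feasible fractional MLCP solution of the same value. -/
lemma mlcp_int_to_frac (n : ℕ) (L R : ι → ℕ) (k : ℕ) (C : Fin k → Finset ι)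
    (hdisj : ∀ a b, a ≠ b → Disjoint (C a) (C b))
    (hcov : ∀ a, ∀ m ∈ Finset.Icc 1 n, ∃ i ∈ C a, m ∈ Finset.Icc (L i) (R i)) :
    ∃ t : Finset ι → ℝ,
        (∀ X, 0 ≤ t X) ∧
        (∀ X, t X ≠ 0 → ∀ m ∈ Finset.Icc 1 n, ∃ i ∈ X, m ∈ Finset.Icc (L i) (R i)) ∧
        (∀ i : ι, ∑ X ∈ Finset.univ.filter (fun X : Finset ι => i ∈ X), t X ≤ 1) ∧
        ∑ X : Finset ι, t X = (k : ℝ) := by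
  refine ⟨fun X => ((Finset.univ.filter (fun a : Fin k => C a = X)).card : ℝ), ?_, ?_, ?_, ?_⟩
  · intro X; positivity
  · intro X hX m hm
    have hne : (Finset.univ.filter (fun a : Fin k => C a = X)).Nonempty := by
      rw [← Finset.card_pos]
      refine Nat.pos_of_ne_zero fun h => hX ?_
      simp only [h, Nat.cast_zero]
    obtain ⟨a, ha⟩ := hne
    have : C a = X := (Finset.mem_filter.1 ha).2
    rw [← this]
    exact hcov a m hm
  · intro i
    have hle : (Finset.univ.filter (fun a : Fin k => i ∈ C a)).card ≤ 1 := by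
      rw [Finset.card_le_one]
      intro a ha b hb
      by_contra hne
      exact Finset.disjoint_left.1 (hdisj a b hne)
        (Finset.mem_filter.1 ha).2 (Finset.mem_filter.1 hb).2
    have heq : (Finset.univ.filter (fun a : Fin k => i ∈ C a)).card
        = ∑ X ∈ Finset.univ.filter (fun X : Finset ι => i ∈ X),
            (Finset.univ.filter (fun a : Fin k => C a = X)).card := by
      rw [Finset.card_eq_sum_card_fiberwise
        (f := C) (t := Finset.univ.filter (fun X : Finset ι => i ∈ X))
        (fun a ha => Finset.mem_filter.2 ⟨Finset.mem_univ _, (Finset.mem_filter.1 ha).2⟩)]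
      apply Finset.sum_congr rfl
      intro X hX
      congr 1
      ext a
      simp only [Finset.mem_filter, Finset.mem_univ, true_and]
      constructor
      · exact fun h => h.2
      · intro h; exact ⟨h ▸ (Finset.mem_filter.1 hX).2, h⟩
    calc ∑ X ∈ Finset.univ.filter (fun X : Finset ι => i ∈ X),
          ((Finset.univ.filter (fun a : Fin k => C a = X)).card : ℝ)
        = ((Finset.univ.filter (fun a : Fin k => i ∈ C a)).card : ℝ) := by
          rw [heq]; push_cast; ring
      _ ≤ 1 := by exact_mod_cast hle
  · have : (Finset.univ : Finset (Fin k)).card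
        = ∑ X : Finset ι, (Finset.univ.filter (fun a : Fin k => C a = X)).card :=
      Finset.card_eq_sum_card_fiberwise (fun a _ => Finset.mem_univ _)
    rw [← Nat.cast_sum, ← this, Finset.card_univ, Fintype.card_fin]

end mlcpAux

/-- For interval sensors on a line (1-D case), the optimal value of the fractional
MLCP equals the maximum number of pairwise disjoint set covers (DSCP): the MLCP LP has
an integral optimal solution. -/
theorem stmt15 {ι : Type*} [Fintype ι] [DecidableEq ι]
    (n : ℕ) (hn : 1 ≤ n) (L R : ι → ℕ)
    (hLR : ∀ j, 1 ≤ L j ∧ L j ≤ R j ∧ R j ≤ n) :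
    sSup {x : ℝ | ∃ t : Finset ι → ℝ,
        (∀ C, 0 ≤ t C) ∧
        (∀ C, t C ≠ 0 → ∀ m ∈ Finset.Icc 1 n, ∃ i ∈ C, m ∈ Finset.Icc (L i) (R i)) ∧
        (∀ i : ι, ∑ C ∈ Finset.univ.filter (fun C : Finset ι => i ∈ C), t C ≤ 1) ∧
        ∑ C : Finset ι, t C = x} =
    sSup {x : ℝ | ∃ k : ℕ, x = k ∧ ∃ C : Fin k → Finset ι,
        (∀ a b, a ≠ b → Disjoint (C a) (C b)) ∧
        ∀ a, ∀ m ∈ Finset.Icc 1 n, ∃ i ∈ C a, m ∈ Finset.Icc (L i) (R i)} := by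
  set Sfrac : Set ℝ := {x : ℝ | ∃ t : Finset ι → ℝ,
        (∀ C, 0 ≤ t C) ∧
        (∀ C, t C ≠ 0 → ∀ m ∈ Finset.Icc 1 n, ∃ i ∈ C, m ∈ Finset.Icc (L i) (R i)) ∧
        (∀ i : ι, ∑ C ∈ Finset.univ.filter (fun C : Finset ι => i ∈ C), t C ≤ 1) ∧
        ∑ C : Finset ι, t C = x} with hSfrac
  set Sint : Set ℝ := {x : ℝ | ∃ k : ℕ, x = k ∧ ∃ C : Fin k → Finset ι,
        (∀ a b, a ≠ b → Disjoint (C a) (C b)) ∧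
        ∀ a, ∀ m ∈ Finset.Icc 1 n, ∃ i ∈ C a, m ∈ Finset.Icc (L i) (R i)} with hSint
  have hIcc : (Finset.Icc 1 n).Nonempty := ⟨1, by simp; omega⟩
  -- the minimum coverage
  set K : ℕ := (Finset.Icc 1 n).inf' hIcc
      (fun m => ((Finset.univ : Finset ι).filter (fun j => L j ≤ m ∧ m ≤ R j)).card) with hK
  have hKle : ∀ m ∈ Finset.Icc 1 n,
      K ≤ ((Finset.univ : Finset ι).filter (fun j => L j ≤ m ∧ m ≤ R j)).card :=
    fun m hm => Finset.inf'_le _ hm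
  obtain ⟨m0, hm0mem, hm0⟩ := Finset.exists_mem_eq_inf' hIcc
      (fun m => ((Finset.univ : Finset ι).filter (fun j => L j ≤ m ∧ m ≤ R j)).card)
  -- every fractional value is at most K
  have hfracK : ∀ x ∈ Sfrac, x ≤ (K : ℝ) := by
    rintro x ⟨t, ht0, htcov, htcap, htsum⟩
    rw [← htsum]
    refine mlcp_frac_le n L R K m0 hm0.symm t ht0 ?_ htcap
    intro C hC
    obtain ⟨i, hi, hic⟩ := htcov C hC m0 hm0mem
    exact ⟨i, hi, by simpa [Finset.mem_Icc] using hic⟩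
  -- K is achieved by disjoint covers
  have hKint : (K : ℝ) ∈ Sint := by
    obtain ⟨C, _, hCdisj, hCcov⟩ := mlcp_many_covers n L R K Finset.univ hKle
    exact ⟨K, rfl, C, hCdisj, fun a m hm => by
      obtain ⟨i, hi, h1, h2⟩ := hCcov a m hm
      exact ⟨i, hi, Finset.mem_Icc.2 ⟨h1, h2⟩⟩⟩
  -- Sint ⊆ Sfrac
  have hsub : Sint ⊆ Sfrac := by
    rintro x ⟨k, rfl, C, hdisj, hcov⟩
    obtain ⟨t, h0, h1, h2, h3⟩ := mlcp_int_to_frac n L R k C hdisj hcov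
    exact ⟨t, h0, h1, h2, h3⟩
  have hne_frac : Sfrac.Nonempty := by
    refine ⟨0, fun _ => 0, fun _ => le_rfl, fun C hC => absurd rfl hC, ?_, by simp⟩
    intro i
    simp
  have hne_int : Sint.Nonempty := ⟨0, 0, by simp, fun a => a.elim0, fun a => a.elim0,
    fun a => a.elim0⟩
  have hbdd_frac : BddAbove Sfrac := ⟨(K : ℝ), fun x hx => hfracK x hx⟩
  have hbdd_int : BddAbove Sint := ⟨(K : ℝ), fun x hx => hfracK x (hsub hx)⟩
  apply le_antisymm
  · apply csSup_le hne_frac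
    intro x hx
    exact (hfracK x hx).trans (le_csSup hbdd_int hKint)
  · exact csSup_le_csSup hbdd_frac hne_int hsub
end

section
/- In the graph G' obtained by the c-copy construction from G, a set of vertices D' ⊆ V(G') is a dominating set of G' if and only if its projection π(D') = {v : (v,i) ∈ D' for some i} is a dominating set of G; consequently, the domatic number of G' equals the maximum number of dominating sets of G such that each vertex of G is used in at most c of them (the c-domatic multi-partition number). -/
/-- The `c`-copy construction: `c` copies of each vertex of `G`, a clique on the copies
of each vertex, and a complete bipartite graph between copies of adjacent vertices. -/
def copyGraph {V : Type*} (G : SimpleGraph V) (c : ℕ) : SimpleGraph (V × Fin c) where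
  Adj x y := (x.1 = y.1 ∧ x.2 ≠ y.2) ∨ G.Adj x.1 y.1
  symm := by
    constructor
    intro x y h
    rcases h with ⟨h1, h2⟩ | h
    · exact Or.inl ⟨h1.symm, h2.symm⟩
    · exact Or.inr (G.symm.symm _ _ h)
  loopless := by
    constructor
    intro x h
    rcases h with ⟨_, h2⟩ | h
    · exact h2 rfl
    · exact G.loopless.irrefl _ h

/-- A set `D'` of vertices of the `c`-copy graph `G'` is dominating iff its projection
to `G` is dominating; consequently, for every `k`, `G'` has `k` pairwise disjoint
dominating sets iff `G` has `k` dominating sets with every vertex used in at most `c`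
of them (the `c`-domatic multi-partition number equals the domatic number of `G'`). -/
theorem stmt18 {V : Type*} (G : SimpleGraph V) (c : ℕ) (hc : 1 ≤ c) :
    (∀ D' : Set (V × Fin c),
      ((∀ x : V × Fin c, x ∈ D' ∨ ∃ y ∈ D', (copyGraph G c).Adj x y) ↔
        (∀ v : V, (∃ i, (v, i) ∈ D') ∨ ∃ u, (∃ i, (u, i) ∈ D') ∧ G.Adj v u))) ∧
    (∀ k : ℕ,
      (∃ D' : Fin k → Set (V × Fin c),
        (∀ a b, a ≠ b → Disjoint (D' a) (D' b)) ∧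
        ∀ a, ∀ x : V × Fin c, x ∈ D' a ∨ ∃ y ∈ D' a, (copyGraph G c).Adj x y) ↔
      (∃ D : Fin k → Set V,
        (∀ a, ∀ v : V, v ∈ D a ∨ ∃ u ∈ D a, G.Adj v u) ∧
        ∀ v : V, {a : Fin k | v ∈ D a}.ncard ≤ c)) := by
  classical
  have key : ∀ D' : Set (V × Fin c),
      ((∀ x : V × Fin c, x ∈ D' ∨ ∃ y ∈ D', (copyGraph G c).Adj x y) ↔
        (∀ v : V, (∃ i, (v, i) ∈ D') ∨ ∃ u, (∃ i, (u, i) ∈ D') ∧ G.Adj v u)) := by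
    intro D'
    constructor
    · intro h v
      have i0 : Fin c := ⟨0, hc⟩
      rcases h (v, i0) with hm | ⟨⟨u, j⟩, hy, hadj⟩
      · exact Or.inl ⟨i0, hm⟩
      · rcases hadj with ⟨h1, _⟩ | h2
        · exact Or.inl ⟨j, by dsimp only at h1; rw [h1]; exact hy⟩
        · exact Or.inr ⟨u, ⟨j, hy⟩, h2⟩
    · rintro h ⟨v, i⟩
      rcases h v with ⟨j, hj⟩ | ⟨u, ⟨j, hj⟩, hadj⟩
      · by_cases hij : j = i
        · exact Or.inl (hij ▸ hj)
        · exact Or.inr ⟨(v, j), hj, Or.inl ⟨rfl, fun e => hij e.symm⟩⟩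
      · exact Or.inr ⟨(u, j), hj, Or.inr hadj⟩
  refine ⟨key, fun k => ⟨?_, ?_⟩⟩
  · rintro ⟨D', hdisj, hdom⟩
    refine ⟨fun a => {v | ∃ i, (v, i) ∈ D' a}, fun a v => (key (D' a)).mp (hdom a) v, ?_⟩
    intro v
    have hineq : Nat.card {a : Fin k | ∃ i, (v, i) ∈ D' a} ≤ c := by
      have hf : Function.Injective
          (fun a : {a : Fin k | ∃ i, (v, i) ∈ D' a} => Classical.choose a.2) := by
        intro a b hab
        dsimp only at hab
        have ha := Classical.choose_spec a.2
        have hb := Classical.choose_spec b.2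
        rw [hab] at ha
        by_contra hne
        have hab' : (a : Fin k) ≠ b := fun e => hne (Subtype.ext e)
        exact (hdisj a b hab').le_bot ⟨ha, hb⟩ |>.elim
      calc Nat.card {a : Fin k | ∃ i, (v, i) ∈ D' a}
          ≤ Nat.card (Fin c) := Nat.card_le_card_of_injective _ hf
        _ = c := by simp
    rw [← Nat.card_coe_set_eq]
    exact hineq
  · rintro ⟨D, hdom, hcard⟩
    have hg : ∀ v : V, ∃ g : {a : Fin k // v ∈ D a} → Fin c, Function.Injective g := by
      intro v
      haveI : Fintype {a : Fin k // v ∈ D a} := Fintype.ofFinite _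
      have hle : Fintype.card {a : Fin k // v ∈ D a} ≤ Fintype.card (Fin c) := by
        have h1 : Nat.card {a : Fin k // v ∈ D a}
            = ({a : Fin k | v ∈ D a} : Set (Fin k)).ncard :=
          Nat.card_coe_set_eq _
        rw [Fintype.card_fin]
        calc Fintype.card {a : Fin k // v ∈ D a}
            = Nat.card {a : Fin k // v ∈ D a} := (Nat.card_eq_fintype_card).symm
          _ = _ := h1
          _ ≤ c := hcard v
      obtain ⟨e⟩ := Function.Embedding.nonempty_of_card_le hle
      exact ⟨e, e.injective⟩
    choose g hginj using hg
    refine ⟨fun a => {x : V × Fin c | ∃ h : x.1 ∈ D a, g x.1 ⟨a, h⟩ = x.2}, ?_, ?_⟩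
    · intro a b hab
      rw [Set.disjoint_left]
      rintro ⟨v, i⟩ ⟨ha, hia⟩ ⟨hb, hib⟩
      exact hab (congrArg Subtype.val (hginj v (hia.trans hib.symm)))
    · intro a
      refine (key _).mpr fun v => ?_
      rcases hdom a v with hv | ⟨u, hu, hadj⟩
      · exact Or.inl ⟨g v ⟨a, hv⟩, hv, rfl⟩
      · exact Or.inr ⟨u, ⟨g u ⟨a, hu⟩, hu, rfl⟩, hadj⟩
end
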